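/- Let R be an eDCTRS over a signature F. If the optimized unraveling U_opt is sound for R (for all s, t ∈ T(F,V), s →*_{U_opt(R)} t implies s →*_R t), then Ohlebusch's unraveling U is sound for R (for all s, t ∈ T(F,V), s →*_{U(R)} t implies s →*_R t); likewise, if U_opt is sound for R w.r.t. EV-safe reduction, then U is sound for R w.r.t. EV-safe reduction. -/

import Mathlib

set_option maxHeartbeats 1000000

universe u

/-! ## Terms -/

inductive Term (α : Type u) : Type u where
  | var : ℕ → Term α
  | app : α → List (Term α) → Term α

namespace Term

variable {α : Type u}

/-- The list of variable occurrences of a term (left-to-right). -/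
def varList : Term α → List ℕ
  | var x => [x]
  | app _ ts => ts.attach.foldr (fun t acc => varList t.1 ++ acc) []
decreasing_by
  simp only [Term.app.sizeOf_spec]
  have := List.sizeOf_lt_of_mem t.2
  omega

/-- The list of (function symbol, number of arguments) occurrences of a term. -/
def apps : Term α → List (α × ℕ)
  | var _ => []
  | app f ts => (f, ts.length) :: ts.attach.foldr (fun t acc => apps t.1 ++ acc) []
decreasing_by
  simp only [Term.app.sizeOf_spec]
  have := List.sizeOf_lt_of_mem t.2
  omega

/-- `Var(t)`: the set of variables of a term. -/
def varFinset (t : Term α) : Finset ℕ := t.varList.toFinset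

/-- All function symbols of the term belong to the signature `F`. -/
def overSig (F : Set α) (t : Term α) : Prop := ∀ p ∈ t.apps, p.1 ∈ F

/-- `t ∈ T(F,V)`: all function symbols belong to `F` and are applied
according to their arities. -/
def inT (F : Set α) (ar : α → ℕ) (t : Term α) : Prop :=
  ∀ p ∈ t.apps, p.1 ∈ F ∧ ar p.1 = p.2

/-- A term is linear if no variable occurs twice in it. -/
def Linear (t : Term α) : Prop := t.varList.Nodup

/-- A term is ground if it contains no variable. -/
def Ground (t : Term α) : Prop := t.varList = []

/-- Applying a substitution to a term. -/
def subst (σ : ℕ → Term α) : Term α → Term α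
  | var x => σ x
  | app f ts => app f (ts.attach.map (fun t => subst σ t.1))
decreasing_by
  simp only [Term.app.sizeOf_spec]
  have := List.sizeOf_lt_of_mem t.2
  omega

def isVar : Term α → Prop
  | var _ => True
  | app _ _ => False

def root? : Term α → Option α
  | var _ => none
  | app f _ => some f

def args : Term α → List (Term α)
  | var _ => []
  | app _ ts => ts

end Term

def junkPair {α : Type u} : Term α × Term α := (Term.var 0, Term.var 0)

/-! ## Conditional rewrite rules -/

/-- An extended (oriented) conditional rewrite rule `l → r ⇐ s₁ ↠ t₁; …; s_k ↠ t_k`,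
where `conds` is the list of pairs `(sᵢ, tᵢ)`. -/
structure ERule (α : Type u) : Type u where
  lhs : Term α
  rhs : Term α
  conds : List (Term α × Term α)

namespace ERule

variable {α : Type u}

def nonLV (ρ : ERule α) : Prop := ¬ ρ.lhs.isVar
def nonRV (ρ : ERule α) : Prop := ¬ ρ.rhs.isVar

/-- `X_{j+1} = Var(l, t_1, …, t_j)` (0-based index `j`). -/
def Xset (ρ : ERule α) (j : ℕ) : Finset ℕ :=
  ρ.lhs.varFinset ∪ ((ρ.conds.take j).map (fun c => c.2.varFinset)).foldr (· ∪ ·) ∅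

/-- `Y_{j+1} = Var(r, t_{j+1}, s_{j+2}, t_{j+2}, …, s_k, t_k)` (0-based index `j`). -/
def Yset (ρ : ERule α) (j : ℕ) : Finset ℕ :=
  ρ.rhs.varFinset ∪ (ρ.conds.getD j junkPair).2.varFinset ∪
    ((ρ.conds.drop (j+1)).map (fun c => c.1.varFinset ∪ c.2.varFinset)).foldr (· ∪ ·) ∅

/-- `Z_i = X_i ∩ Y_i`. -/
def Zset (ρ : ERule α) (j : ℕ) : Finset ℕ := ρ.Xset j ∩ ρ.Yset j

/-- Determinism: `Var(sᵢ) ⊆ Var(l, t₁, …, t_{i-1})`. -/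
def Det (ρ : ERule α) : Prop :=
  ∀ j < ρ.conds.length, (ρ.conds.getD j junkPair).1.varFinset ⊆ ρ.Xset j

/-- Type 3: `Var(r) ⊆ Var(l, s₁, t₁, …, s_k, t_k)`. -/
def Type3 (ρ : ERule α) : Prop :=
  ρ.rhs.varFinset ⊆
    ρ.lhs.varFinset ∪ ((ρ.conds.map (fun c => c.1.varFinset ∪ c.2.varFinset)).foldr (· ∪ ·) ∅)

/-- Left-linearity of a rule. -/
def LL (ρ : ERule α) : Prop := ρ.lhs.Linear
/-- Right-linearity of a rule. -/
def RL (ρ : ERule α) : Prop := ρ.rhs.Linear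
/-- Non-erasingness of a rule: `Var(l) ⊆ Var(r)`. -/
def NE (ρ : ERule α) : Prop := ρ.lhs.varFinset ⊆ ρ.rhs.varFinset

/-- `EVar(l → r) = Var(r) \\ Var(l)`, the extra variables of a rule. -/
def extraVars (ρ : ERule α) : Finset ℕ := ρ.rhs.varFinset \ ρ.lhs.varFinset

/-- The inverted rule `(l → r ⇐ s₁ ↠ t₁; …; s_k ↠ t_k)⁻¹ = r → l ⇐ t_k ↠ s_k; …; t₁ ↠ s₁`. -/
def inv (ρ : ERule α) : ERule α :=
  ⟨ρ.rhs, ρ.lhs, (ρ.conds.map (fun c => (c.2, c.1))).reverse⟩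

def allVarFinset (ρ : ERule α) : Finset ℕ :=
  ρ.lhs.varFinset ∪ ρ.rhs.varFinset ∪
    ((ρ.conds.map (fun c => c.1.varFinset ∪ c.2.varFinset)).foldr (· ∪ ·) ∅)

/-- A number strictly larger than every variable of the rule; used to pick fresh variables. -/
def freshBase (ρ : ERule α) : ℕ := ρ.allVarFinset.sup id + 1

/-- All terms of the rule use only symbols of `F`. -/
def overSig (F : Set α) (ρ : ERule α) : Prop :=
  ρ.lhs.overSig F ∧ ρ.rhs.overSig F ∧ ∀ c ∈ ρ.conds, c.1.overSig F ∧ c.2.overSig F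

/-- All terms of the rule are in `T(F,V)` (symbols of `F`, arity-correct). -/
def inT (F : Set α) (ar : α → ℕ) (ρ : ERule α) : Prop :=
  ρ.lhs.inT F ar ∧ ρ.rhs.inT F ar ∧ ∀ c ∈ ρ.conds, c.1.inT F ar ∧ c.2.inT F ar

end ERule

/-! ## Reduction relations -/

/-- One-hole contexts. -/
inductive Ctx (α : Type u) : Type u where
  | hole : Ctx α
  | app : α → List (Term α) → Ctx α → List (Term α) → Ctx α

def Ctx.plug {α : Type u} : Ctx α → Term α → Term α
  | .hole, t => t
  | .app f pre c post, t => .app f (pre ++ c.plug t :: post)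

/-- The approximations `→_{(n),R}` of the reduction relation of an oriented eCTRS. -/
def RedN {α : Type u} (R : Set (ERule α)) : ℕ → Term α → Term α → Prop
  | 0 => fun _ _ => False
  | n + 1 => fun s t =>
      RedN R n s t ∨
      ∃ ρ ∈ R, ∃ C : Ctx α, ∃ σ : ℕ → Term α,
        s = C.plug (ρ.lhs.subst σ) ∧ t = C.plug (ρ.rhs.subst σ) ∧
        ∀ c ∈ ρ.conds, Relation.ReflTransGen (RedN R n) (c.1.subst σ) (c.2.subst σ)

/-- The reduction relation `→_R` of an oriented eCTRS. -/
def Red {α : Type u} (R : Set (ERule α)) (s t : Term α) : Prop := ∃ n, RedN R n s t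

/-- `→*_R`. -/
def RedStar {α : Type u} (R : Set (ERule α)) : Term α → Term α → Prop :=
  Relation.ReflTransGen (Red R)

/-- The approximations of the reduction relation of a join CTRS
(conditions interpreted as joinability). -/
def JRedN {α : Type u} (R : Set (ERule α)) : ℕ → Term α → Term α → Prop
  | 0 => fun _ _ => False
  | n + 1 => fun s t =>
      JRedN R n s t ∨
      ∃ ρ ∈ R, ∃ C : Ctx α, ∃ σ : ℕ → Term α,
        s = C.plug (ρ.lhs.subst σ) ∧ t = C.plug (ρ.rhs.subst σ) ∧
        ∀ c ∈ ρ.conds, ∃ w, Relation.ReflTransGen (JRedN R n) (c.1.subst σ) w ∧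
          Relation.ReflTransGen (JRedN R n) (c.2.subst σ) w

/-- The reduction relation of a join CTRS. -/
def JRed {α : Type u} (R : Set (ERule α)) (s t : Term α) : Prop := ∃ n, JRedN R n s t

def JRedStar {α : Type u} (R : Set (ERule α)) : Term α → Term α → Prop :=
  Relation.ReflTransGen (JRed R)

/-- The underlying unconditional system `R_u`. -/
def Ru {α : Type u} (R : Set (ERule α)) : Set (ERule α) :=
  (fun ρ : ERule α => ⟨ρ.lhs, ρ.rhs, []⟩) '' R

/-- Normal form w.r.t. a system. -/
def IsNF {α : Type u} (R : Set (ERule α)) (t : Term α) : Prop := ∀ w, ¬ Red R t w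

/-! ## Unravelings for deterministic CTRSs -/

/-- The fixed-order sequence of a finite set of variables. -/
def seqOf (s : Finset ℕ) : List ℕ := s.sort (· ≤ ·)

/-- `U(t, x⃗)`: a U symbol applied to a term followed by a sequence of variables. -/
def mkU {α : Type u} (f : α) (t : Term α) (xs : List ℕ) : Term α :=
  .app f (t :: xs.map Term.var)

/-- Generic sequential unraveling of a single deterministic rule, where `carry j` is
the variable sequence carried by the `j`-th U symbol. -/
def unravelWith {α : Type u} (carry : ℕ → List ℕ) (u : ℕ → α) (ρ : ERule α) :
    List (ERule α) :=
  (List.range (ρ.conds.length + 1)).map (fun j =>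
    ⟨ if j = 0 then ρ.lhs else mkU (u (j-1)) (ρ.conds.getD (j-1) junkPair).2 (carry (j-1)),
      if j < ρ.conds.length then mkU (u j) (ρ.conds.getD j junkPair).1 (carry j) else ρ.rhs,
      [] ⟩)

/-- Ohlebusch's unraveling `U` of a single rule (carrying `X⃗ᵢ`). -/
def unravelU {α : Type u} (u : ℕ → α) (ρ : ERule α) : List (ERule α) :=
  unravelWith (fun j => seqOf (ρ.Xset j)) u ρ

/-- The optimized unraveling `U_opt` of a single rule (carrying `Z⃗ᵢ`). -/
def unravelOpt {α : Type u} (u : ℕ → α) (ρ : ERule α) : List (ERule α) :=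
  unravelWith (fun j => seqOf (ρ.Zset j)) u ρ

/-- `U(R)`. -/
def USys {α : Type u} (u : ERule α → ℕ → α) (R : Set (ERule α)) : Set (ERule α) :=
  { q | ∃ ρ ∈ R, q ∈ unravelU (u ρ) ρ }

/-- `U_opt(R)`. -/
def UoptSys {α : Type u} (u : ERule α → ℕ → α) (R : Set (ERule α)) : Set (ERule α) :=
  { q | ∃ ρ ∈ R, q ∈ unravelOpt (u ρ) ρ }

/-- The U symbols introduced for the rules of `R`. -/
def USymbols {α : Type u} (u : ERule α → ℕ → α) (R : Set (ERule α)) : Set α :=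
  { a | ∃ ρ ∈ R, ∃ i < ρ.conds.length, a = u ρ i }

/-- Freshness of the U symbols: they do not occur in `F` and are pairwise distinct. -/
def UFresh {α : Type u} (F : Set α) (u : ERule α → ℕ → α) (R : Set (ERule α)) : Prop :=
  (∀ ρ ∈ R, ∀ i < ρ.conds.length, u ρ i ∉ F) ∧
  (∀ ρ ∈ R, ∀ ρ' ∈ R, ∀ i < ρ.conds.length, ∀ j < ρ'.conds.length,
      u ρ i = u ρ' j → ρ = ρ' ∧ i = j)

/-! ## Positions, parallel reduction, EV-safe reduction -/

abbrev Pos := List ℕ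

/-- Subterm at a position. -/
def Term.sub? {α : Type u} : Pos → Term α → Option (Term α)
  | [], t => some t
  | _ :: _, .var _ => none
  | i :: p, .app _ ts => (ts[i]?).bind (Term.sub? p)

/-- Replacing the subterm at a position by `w`. -/
def Term.replaceAt {α : Type u} (w : Term α) : Pos → Term α → Term α
  | [], _ => w
  | _ :: _, .var x => .var x
  | i :: p, .app f ts =>
      .app f (ts.mapIdx (fun j s => if j = i then Term.replaceAt w p s else s))

/-- `Pos_F(t)`: non-variable positions of `t`. -/
def PosF {α : Type u} (t : Term α) : Set Pos :=
  { p | ∃ f ts, Term.sub? p t = some (Term.app f ts) }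

/-- `Pos_V(t)`: variable positions of `t`. -/
def PosV {α : Type u} (t : Term α) : Set Pos :=
  { p | ∃ x, Term.sub? p t = some (Term.var x) }

/-- One rewrite step of an eTRS at position `p`. -/
def RedAt {α : Type u} (R : Set (ERule α)) (p : Pos) (s t : Term α) : Prop :=
  ∃ ρ ∈ R, ρ.conds = [] ∧ ∃ σ : ℕ → Term α,
    Term.sub? p s = some (ρ.lhs.subst σ) ∧ t = Term.replaceAt (ρ.rhs.subst σ) p s

/-- Two positions are parallel. -/
def ParallelPos (p q : Pos) : Prop := ¬ p <+: q ∧ ¬ q <+: p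

/-- A sequence of single steps at the listed positions. -/
inductive RedSeqAt {α : Type u} (R : Set (ERule α)) : List Pos → Term α → Term α → Prop
  | nil (t : Term α) : RedSeqAt R [] t t
  | cons {ps s s' t} (p : Pos) : RedAt R p s s' → RedSeqAt R ps s' t →
      RedSeqAt R (p :: ps) s t

/-- One parallel rewrite step contracting the (pairwise parallel) positions in `P`. -/
def ParStep {α : Type u} (R : Set (ERule α)) (P : List Pos) (s t : Term α) : Prop :=
  P.Pairwise ParallelPos ∧ RedSeqAt R P s t

/-- The parallel reduction `⇉_R`. -/
def ParRed {α : Type u} (R : Set (ERule α)) (s t : Term α) : Prop :=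
  ∃ P, ParStep R P s t

/-- Parallel reduction where every contracted position is at or below a position of `Q`. -/
def ParRedBelow {α : Type u} (R : Set (ERule α)) (Q : Set Pos) (s t : Term α) : Prop :=
  ∃ P, ParStep R P s t ∧ ∀ p ∈ P, ∃ q ∈ Q, q <+: p

/-- `n`-fold composition of a relation. -/
def NFold {β : Type*} (r : β → β → Prop) : ℕ → β → β → Prop
  | 0 => Eq
  | n + 1 => fun a c => ∃ b, r a b ∧ NFold r n b c

/-- The update of the set of basic positions w.r.t. extra variables after a rewrite step
at position `p` with rule `l → r`. -/
def nextB {α : Type u} (B : Set Pos) (p : Pos) (l r : Term α) : Set Pos :=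
  { q | q ∈ B ∧ ¬ p <+: q }
  ∪ { q | ∃ q' ∈ PosF r, q = p ++ q' }
  ∪ { q | ∃ pv p' q', pv ∈ PosV l ∧ Term.sub? pv l = Term.sub? p' r ∧
        (p ++ pv ++ q') ∈ B ∧ q = p ++ p' ++ q' }

/-- Reduction sequences of an eTRS based on a set `B` of positions w.r.t. extra
variables, where additionally every term substituted for an extra variable of the
applied rule satisfies `T` (EV-instantiation on `T`). -/
inductive EVSeq {α : Type u} (R : Set (ERule α)) (T : Term α → Prop) :
    Set Pos → Term α → Term α → Prop
  | refl (B : Set Pos) (t : Term α) : EVSeq R T B t t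
  | step {B : Set Pos} {s s' t : Term α} (p : Pos) (ρ : ERule α) (σ : ℕ → Term α) :
      ρ ∈ R → ρ.conds = [] →
      Term.sub? p s = some (ρ.lhs.subst σ) →
      s' = Term.replaceAt (ρ.rhs.subst σ) p s →
      p ∈ B →
      (∀ x ∈ ρ.extraVars, T (σ x)) →
      EVSeq R T (nextB B p ρ.lhs ρ.rhs) s' t →
      EVSeq R T B s t

/-- An EV-safe reduction sequence `s ↪*_R t`, EV-instantiated on `T`. -/
def EVSafeI {α : Type u} (R : Set (ERule α)) (T : Term α → Prop) (s t : Term α) : Prop :=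
  EVSeq R T (PosF s) s t

/-- An EV-safe reduction sequence `s ↪*_R t`. -/
def EVSafe {α : Type u} (R : Set (ERule α)) (s t : Term α) : Prop :=
  EVSeq R (fun _ => True) (PosF s) s t

/-! ## Tree homomorphisms -/

/-- Applying the tree homomorphism determined by `h` to a term:
`φ(f(t₁, …, t_n)) = h(f){xᵢ ↦ φ(tᵢ)}` (the formal variable `xᵢ` is the variable `i - 1`). -/
def applyHom {α : Type u} (h : α → Term α) : Term α → Term α
  | .var x => .var x
  | .app f ts =>
      Term.subst (fun i => (ts.attach.map (fun s => applyHom h s.1)).getD i (Term.var i)) (h f)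
decreasing_by
  simp only [Term.app.sizeOf_spec]
  have := List.sizeOf_lt_of_mem s.2
  omega

/-- The image of a rule under a tree homomorphism. -/
def homRule {α : Type u} (h : α → Term α) (ρ : ERule α) : ERule α :=
  ⟨applyHom h ρ.lhs, applyHom h ρ.rhs,
    ρ.conds.map (fun c => (applyHom h c.1, applyHom h c.2))⟩

/-- The image of an eCTRS under a tree homomorphism. -/
def homSys {α : Type u} (h : α → Term α) (R : Set (ERule α)) : Set (ERule α) :=
  homRule h '' R

/-- `h` determines a tree homomorphism from `T(G₁,V)` to `T(G₂,V)` (w.r.t. arity `ar`):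
for `f ∈ G₁` of arity `n`, `h f` is a term over `G₂` with variables among `x₁, …, x_n`. -/
def TreeHom {α : Type u} (ar : α → ℕ) (G₁ G₂ : Set α) (h : α → Term α) : Prop :=
  ∀ f ∈ G₁, (h f).overSig G₂ ∧ ∀ x ∈ (h f).varList, x < ar f

/-- `F`-identical tree homomorphism. -/
def FIdentical {α : Type u} (ar : α → ℕ) (F : Set α) (h : α → Term α) : Prop :=
  ∀ f ∈ F, h f = Term.app f ((List.range (ar f)).map Term.var)

/-- Non-erasing tree homomorphism (on the signature `G`). -/
def HomNonErasing {α : Type u} (ar : α → ℕ) (G : Set α) (h : α → Term α) : Prop :=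
  ∀ f ∈ G, (h f).varFinset = Finset.range (ar f)

/-- The homomorphism is EV-preserving for the eTRS `S`. -/
def EVPreserving {α : Type u} (h : α → Term α) (S : Set (ERule α)) : Prop :=
  ∀ ρ ∈ S, (homRule h ρ).extraVars = ρ.extraVars

/-! ## Unravelings for join and normal CTRSs, and `Norm` -/

/-- Marchiori-style unraveling `U_J` of a join conditional rule. -/
def unravelJ {α : Type u} (uj : ERule α → α) (ρ : ERule α) : List (ERule α) :=
  if ρ.conds.isEmpty then [ρ]
  else
    [ ⟨ρ.lhs,
        Term.app (uj ρ) ((ρ.conds.foldr (fun c acc => c.1 :: c.2 :: acc) []) ++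
          (seqOf ρ.lhs.varFinset).map Term.var), []⟩,
      ⟨Term.app (uj ρ)
          (((List.range ρ.conds.length).foldr
              (fun j acc => Term.var (ρ.freshBase + j) :: Term.var (ρ.freshBase + j) :: acc) []) ++
            (seqOf ρ.lhs.varFinset).map Term.var),
        ρ.rhs, []⟩ ]

def UJSys {α : Type u} (uj : ERule α → α) (R : Set (ERule α)) : Set (ERule α) :=
  { q | ∃ ρ ∈ R, q ∈ unravelJ uj ρ }

/-- Unraveling `U_N` of a normal conditional rule. -/
def unravelN {α : Type u} (un : ERule α → α) (ρ : ERule α) : List (ERule α) :=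
  if ρ.conds.isEmpty then [ρ]
  else
    [ ⟨ρ.lhs,
        Term.app (un ρ) (ρ.conds.map Prod.fst ++ (seqOf ρ.lhs.varFinset).map Term.var), []⟩,
      ⟨Term.app (un ρ) (ρ.conds.map Prod.snd ++ (seqOf ρ.lhs.varFinset).map Term.var),
        ρ.rhs, []⟩ ]

def UNSys {α : Type u} (un : ERule α → α) (R : Set (ERule α)) : Set (ERule α) :=
  { q | ∃ ρ ∈ R, q ∈ unravelN un ρ }

/-- `Norm` on rules: `l → r ⇐ eq(s₁,t₁) ↠ eq(⊤,⊤); …; eq(s_k,t_k) ↠ eq(⊤,⊤)`. -/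
def normRule {α : Type u} (eqS topS : α) (ρ : ERule α) : ERule α :=
  ⟨ρ.lhs, ρ.rhs,
    ρ.conds.map (fun c =>
      (Term.app eqS [c.1, c.2], Term.app eqS [Term.app topS [], Term.app topS []]))⟩

/-- `Norm(R) = {eq(x,x) → eq(⊤,⊤)} ∪ {Norm(ρ) | ρ ∈ R}`. -/
def NormSys {α : Type u} (eqS topS : α) (R : Set (ERule α)) : Set (ERule α) :=
  insert
    ⟨Term.app eqS [Term.var 0, Term.var 0],
      Term.app eqS [Term.app topS [], Term.app topS []], []⟩
    (normRule eqS topS '' R)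

/-- A normal CTRS: a deterministic, non-LV CTRS all of whose condition right-hand
sides are ground normal forms w.r.t. `R_u`. -/
def NormalCTRS {α : Type u} (R : Set (ERule α)) : Prop :=
  ∀ ρ ∈ R, ρ.Det ∧ ρ.nonLV ∧ ∀ c ∈ ρ.conds, c.2.Ground ∧ IsNF (Ru R) c.2

/-! ### Auxiliary development for Statement 16 -/

namespace UoptSound

open scoped Classical

variable {α : Type u} {β : Type u} {γ : Type u}

/-- counting kept (non-`P`) indices in `[n, n+i)`. -/
noncomputable def cnt (P : ℕ → Prop) (n : ℕ) : ℕ → ℕ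
  | 0 => 0
  | i+1 => cnt P n i + if P (n+i) then 0 else 1

/-- select list elements at kept indices, starting at index `n`. -/
noncomputable def selFrom (P : ℕ → Prop) : ℕ → List β → List β
  | _, [] => []
  | n, a :: l => if P n then selFrom P (n+1) l else a :: selFrom P (n+1) l

theorem cnt_succ (P : ℕ → Prop) (n i : ℕ) :
    cnt P n (i+1) = cnt P n i + if P (n+i) then 0 else 1 := rfl

theorem cnt_succ_shift (P : ℕ → Prop) (n i : ℕ) :
    cnt P n (i+1) = (if P n then 0 else 1) + cnt P (n+1) i := by
  induction i with
  | zero => simp [cnt, Nat.add_comm]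
  | succ i ih =>
      have : cnt P n (i+1+1) = cnt P n (i+1) + if P (n+(i+1)) then 0 else 1 := rfl
      rw [this, ih]
      have : cnt P (n+1) (i+1) = cnt P (n+1) i + if P (n+1+i) then 0 else 1 := rfl
      rw [this]
      have hn : n + (i+1) = n + 1 + i := by omega
      rw [hn, Nat.add_assoc]

theorem cnt_mono (P : ℕ → Prop) (n : ℕ) {i j : ℕ} (h : i ≤ j) : cnt P n i ≤ cnt P n j := by
  induction j with
  | zero =>
      have : i = 0 := by omega
      simp [this]
  | succ j ih =>
      rcases Nat.lt_or_ge i (j+1) with h' | h'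
      · have := ih (by omega)
        have : cnt P n (j+1) = cnt P n j + if P (n+j) then 0 else 1 := rfl
        omega
      · have : i = j + 1 := by omega
        subst this; exact le_refl _

theorem cnt_lt (P : ℕ → Prop) (n : ℕ) {i j : ℕ} (h : i < j) (hi : ¬ P (n+i)) :
    cnt P n i < cnt P n j := by
  have h1 : cnt P n (i+1) = cnt P n i + 1 := by
    have : cnt P n (i+1) = cnt P n i + if P (n+i) then 0 else 1 := rfl
    rw [this, if_neg hi]
  have := cnt_mono P n (show i + 1 ≤ j by omega)
  omega

theorem cnt_inj (P : ℕ → Prop) (n : ℕ) {i j : ℕ} (hi : ¬ P (n+i)) (hj : ¬ P (n+j))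
    (h : i ≠ j) : cnt P n i ≠ cnt P n j := by
  rcases Nat.lt_or_ge i j with h' | h'
  · exact Nat.ne_of_lt (cnt_lt P n h' hi)
  · have : j < i := by omega
    exact (Nat.ne_of_lt (cnt_lt P n this hj)).symm

theorem selFrom_nil (P : ℕ → Prop) (n : ℕ) : selFrom P n ([] : List β) = [] := rfl

theorem selFrom_cons (P : ℕ → Prop) (n : ℕ) (a : β) (l : List β) :
    selFrom P n (a :: l) = if P n then selFrom P (n+1) l else a :: selFrom P (n+1) l := rfl

theorem selFrom_map (P : ℕ → Prop) (g : β → γ) : ∀ (n : ℕ) (l : List β),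
    selFrom P n (l.map g) = (selFrom P n l).map g := by
  intro n l
  induction l generalizing n with
  | nil => rfl
  | cons a l ih =>
      simp only [List.map_cons, selFrom_cons]
      by_cases h : P n <;> simp [h, ih]

theorem selFrom_getElem? (P : ℕ → Prop) : ∀ (l : List β) (n i : ℕ), i < l.length →
    ¬ P (n + i) → (selFrom P n l)[cnt P n i]? = l[i]? := by
  intro l
  induction l with
  | nil => intro n i h; simp at h
  | cons a l ih =>
      intro n i hlt hP
      cases i with
      | zero =>
          simp only [Nat.add_zero] at hP
          simp [selFrom_cons, hP, cnt]
      | succ i =>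
          rw [cnt_succ_shift, selFrom_cons]
          have hP' : ¬ P (n + 1 + i) := by
            have : n + 1 + i = n + (i+1) := by omega
            rwa [this]
          have hlt' : i < l.length := by simpa using hlt
          by_cases h : P n
          · simpa [h] using ih (n+1) i hlt' hP'
          · simp only [if_neg h]
            have := ih (n+1) i hlt' hP'
            rw [Nat.add_comm 1 (cnt P (n+1) i)]
            simpa using this

theorem selFrom_set_of_not (P : ℕ → Prop) : ∀ (l : List β) (n i : ℕ) (a : β),
    i < l.length → ¬ P (n + i) →
    selFrom P n (l.set i a) = (selFrom P n l).set (cnt P n i) a := by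
  intro l
  induction l with
  | nil => intro n i a h; simp at h
  | cons b l ih =>
      intro n i a hlt hP
      cases i with
      | zero =>
          simp only [Nat.add_zero] at hP
          simp [selFrom_cons, hP, cnt]
      | succ i =>
          rw [cnt_succ_shift]
          have hP' : ¬ P (n + 1 + i) := by
            have : n + 1 + i = n + (i+1) := by omega
            rwa [this]
          have hlt' : i < l.length := by simpa using hlt
          simp only [List.set_cons_succ, selFrom_cons]
          by_cases h : P n
          · simpa [h] using ih (n+1) i a hlt' hP'
          · simp only [if_neg h]
            rw [ih (n+1) i a hlt' hP', Nat.add_comm 1 (cnt P (n+1) i)]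
            simp

theorem selFrom_set_of_dropped (P : ℕ → Prop) : ∀ (l : List β) (n i : ℕ) (a : β),
    P (n + i) → selFrom P n (l.set i a) = selFrom P n l := by
  intro l
  induction l with
  | nil => intro n i a _; rfl
  | cons b l ih =>
      intro n i a hP
      cases i with
      | zero =>
          simp only [Nat.add_zero] at hP
          simp [selFrom_cons, hP]
      | succ i =>
          have hP' : P (n + 1 + i) := by
            have : n + 1 + i = n + (i+1) := by omega
            rwa [this]
          simp only [List.set_cons_succ, selFrom_cons]
          by_cases h : P n <;> simp [h, ih (n+1) i a hP']

theorem selFrom_append (P : ℕ → Prop) : ∀ (l1 l2 : List β) (n : ℕ),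
    selFrom P n (l1 ++ l2) = selFrom P n l1 ++ selFrom P (n + l1.length) l2 := by
  intro l1
  induction l1 with
  | nil => intro l2 n; simp [selFrom_nil]
  | cons a l1 ih =>
      intro l2 n
      simp only [List.cons_append, selFrom_cons]
      have harith : n + 1 + l1.length = n + (l1.length + 1) := by omega
      by_cases h : P n <;> simp [h, ih l2 (n+1), harith]

theorem selFrom_id (P : ℕ → Prop) (hP : ∀ i, ¬ P i) : ∀ (n : ℕ) (l : List β),
    selFrom P n l = l := by
  intro n l
  induction l generalizing n with
  | nil => rfl
  | cons a l ih => simp [selFrom_cons, hP n, ih]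

theorem cnt_id (P : ℕ → Prop) (hP : ∀ i, ¬ P i) (n : ℕ) : ∀ i, cnt P n i = i := by
  intro i
  induction i with
  | zero => rfl
  | succ i ih =>
      have : cnt P n (i+1) = cnt P n i + if P (n+i) then 0 else 1 := rfl
      rw [this, ih, if_neg (hP _)]

end UoptSound
namespace UoptSound

theorem Term.ind' {α : Type u} {P : Term α → Prop} (hv : ∀ x, P (.var x))
    (ha : ∀ f ts, (∀ t ∈ ts, P t) → P (.app f ts)) : ∀ t, P t
  | .var x => hv x
  | .app f ts => ha f ts (fun t _ => Term.ind' hv ha t)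
decreasing_by
  simp only [Term.app.sizeOf_spec]
  rename_i ht
  have := List.sizeOf_lt_of_mem ht
  omega

variable {α : Type u}

theorem subst_var (σ : ℕ → Term α) (x : ℕ) : (Term.var x).subst σ = σ x := by
  rw [Term.subst]

theorem subst_app (σ : ℕ → Term α) (f : α) (ts : List (Term α)) :
    (Term.app f ts).subst σ = .app f (ts.map (Term.subst σ)) := by
  rw [Term.subst]
  simp [List.attach_map_val]

theorem apps_app (f : α) (ts : List (Term α)) :
    (Term.app f ts).apps = (f, ts.length) :: (ts.map Term.apps).foldr (· ++ ·) [] := by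
  rw [Term.apps]
  congr 1
  rw [← List.attach_map_val (l := ts) (f := Term.apps), List.foldr_map]

theorem varList_app (f : α) (ts : List (Term α)) :
    (Term.app f ts).varList = (ts.map Term.varList).foldr (· ++ ·) [] := by
  rw [Term.varList]
  rw [← List.attach_map_val (l := ts) (f := Term.varList), List.foldr_map]

theorem mem_foldr_append {x : β} : ∀ (ls : List (List β)),
    (x ∈ ls.foldr (· ++ ·) [] ↔ ∃ l ∈ ls, x ∈ l) := by
  intro ls
  induction ls with
  | nil => simp
  | cons a ls ih => simp [ih]

theorem mem_foldr_union {x : ℕ} : ∀ (ls : List (Finset ℕ)),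
    (x ∈ ls.foldr (· ∪ ·) ∅ ↔ ∃ s ∈ ls, x ∈ s) := by
  intro ls
  induction ls with
  | nil => simp
  | cons a ls ih => simp [ih]

theorem overSig_app {F : Set α} {f : α} {ts : List (Term α)} :
    (Term.app f ts).overSig F ↔ f ∈ F ∧ ∀ t ∈ ts, t.overSig F := by
  constructor
  · intro h
    refine ⟨h (f, ts.length) (by rw [apps_app]; exact List.mem_cons_self), ?_⟩
    intro t ht p hp
    exact h p (by
      rw [apps_app]
      exact List.mem_cons_of_mem _ ((mem_foldr_append _).2 ⟨t.apps, List.mem_map_of_mem ht, hp⟩))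
  · rintro ⟨hf, hts⟩ p hp
    rw [apps_app] at hp
    rcases List.mem_cons.1 hp with h | h
    · subst h; exact hf
    · rcases (mem_foldr_append _).1 h with ⟨l, hl, hpl⟩
      rcases List.mem_map.1 hl with ⟨t, ht, rfl⟩
      exact hts t ht p hpl

theorem mem_varFinset_app {x : ℕ} {f : α} {ts : List (Term α)} :
    x ∈ (Term.app f ts).varFinset ↔ ∃ t ∈ ts, x ∈ t.varFinset := by
  simp only [Term.varFinset, List.mem_toFinset, varList_app, mem_foldr_append]
  constructor
  · rintro ⟨l, hl, hx⟩
    rcases List.mem_map.1 hl with ⟨t, ht, rfl⟩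
    exact ⟨t, ht, by simpa using hx⟩
  · rintro ⟨t, ht, hx⟩
    exact ⟨t.varList, List.mem_map_of_mem ht, by simpa using hx⟩

theorem mem_varFinset_var {x y : ℕ} : x ∈ (Term.var y : Term α).varFinset ↔ x = y := by
  simp [Term.varFinset, Term.varList]

/-! sub? lemmas -/

theorem sub?_nil (t : Term α) : Term.sub? [] t = some t := rfl

theorem sub?_cons_app (i : ℕ) (p : Pos) (f : α) (ts : List (Term α)) :
    Term.sub? (i :: p) (Term.app f ts) = (ts[i]?).bind (Term.sub? p) := rfl

theorem sub?_cons_var (i : ℕ) (p : Pos) (x : ℕ) :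
    Term.sub? (i :: p) (Term.var x : Term α) = none := rfl

theorem sub?_append : ∀ (p q : Pos) (t : Term α),
    Term.sub? (p ++ q) t = (Term.sub? p t).bind (Term.sub? q) := by
  intro p
  induction p with
  | nil => intro q t; rfl
  | cons i p ih =>
      intro q t
      cases t with
      | var x => rfl
      | app f ts =>
          simp only [List.cons_append, sub?_cons_app]
          cases h : ts[i]? with
          | none => rfl
          | some c => simp [ih]

theorem sub?_subst {σ : ℕ → Term α} : ∀ {p : Pos} {t v : Term α},
    Term.sub? p t = some v → Term.sub? p (t.subst σ) = some (v.subst σ) := by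
  intro p
  induction p with
  | nil => intro t v h; cases h; rfl
  | cons i p ih =>
      intro t v h
      cases t with
      | var x => simp [sub?_cons_var] at h
      | app f ts =>
          rw [sub?_cons_app] at h
          cases hc : ts[i]? with
          | none => rw [hc] at h; exact absurd h (by simp)
          | some c =>
              rw [hc] at h; simp only [Option.bind_some] at h
              rw [subst_app, sub?_cons_app, List.getElem?_map, hc]
              simpa using ih h

theorem var_mem_of_sub? {x : ℕ} : ∀ {p : Pos} {t : Term α},
    Term.sub? p t = some (Term.var x) → x ∈ t.varFinset := by
  intro p
  induction p with
  | nil =>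
      intro t h
      cases h
      exact mem_varFinset_var.2 rfl
  | cons i p ih =>
      intro t h
      cases t with
      | var y => simp [sub?_cons_var] at h
      | app f ts =>
          rw [sub?_cons_app] at h
          cases hc : ts[i]? with
          | none => rw [hc] at h; exact absurd h (by simp)
          | some c =>
              rw [hc] at h; simp only [Option.bind_some] at h
              exact mem_varFinset_app.2 ⟨c, by
                have := List.mem_of_getElem? hc
                exact this, ih h⟩

/-! replaceAt lemmas -/

theorem replaceAt_nil (w t : Term α) : Term.replaceAt w [] t = w := rfl

theorem mapIdx_eq_set {i : ℕ} (g : Term α → Term α) (ts : List (Term α)) :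
    ts.mapIdx (fun j s => if j = i then g s else s) = ts.set i (g (ts.getD i (.var 0))) := by
  apply List.ext_getElem?
  intro j
  rw [List.getElem?_mapIdx]
  by_cases h : j = i
  · subst h
    cases hc : ts[j]? with
    | none =>
        have : ts.length ≤ j := by
          by_contra hl
          push_neg at hl
          rw [List.getElem?_eq_getElem hl] at hc
          simp at hc
        rw [List.getElem?_eq_none (by simpa [List.length_set] using this)]
        rfl
    | some c =>
        have hlt : j < ts.length := by
          by_contra hl
          push_neg at hl
          rw [List.getElem?_eq_none hl] at hc; simp at hc
        rw [List.getElem?_set_self (by simpa using hlt)]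
        simp [List.getD_eq_getElem?_getD, hc]
  · rw [List.getElem?_set_ne (Ne.symm h)]
    simp [h]

theorem replaceAt_cons_app (w : Term α) (i : ℕ) (p : Pos) (f : α) (ts : List (Term α)) :
    Term.replaceAt w (i :: p) (Term.app f ts)
      = Term.app f (ts.set i (Term.replaceAt w p (ts.getD i (.var 0)))) := by
  rw [Term.replaceAt]
  congr 1
  exact mapIdx_eq_set _ ts

theorem sub?_replaceAt_self (w : Term α) : ∀ {p : Pos} {t v : Term α},
    Term.sub? p t = some v → Term.sub? p (Term.replaceAt w p t) = some w := by
  intro p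
  induction p with
  | nil => intro t v _; rfl
  | cons i p ih =>
      intro t v h
      cases t with
      | var x => simp [sub?_cons_var] at h
      | app f ts =>
          rw [sub?_cons_app] at h
          cases hc : ts[i]? with
          | none => rw [hc] at h; exact absurd h (by simp)
          | some c =>
              rw [hc] at h; simp only [Option.bind_some] at h
              have hlt : i < ts.length := by
                by_contra hl
                push_neg at hl
                rw [List.getElem?_eq_none hl] at hc; simp at hc
              rw [replaceAt_cons_app, sub?_cons_app,
                List.getElem?_set_self (by simpa using hlt)]
              simp only [Option.bind_some]
              have : ts.getD i (.var 0) = c := by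
                rw [List.getD_eq_getElem?_getD, hc]; rfl
              rw [this]
              exact ih h

end UoptSound
namespace UoptSound

open scoped Classical

variable {α : Type u}

/-- index `i` of an argument list of head symbol `f` is dropped by `U_opt`. -/
def dropped (u : ERule α → ℕ → α) (R : Set (ERule α)) (i : ℕ) (f : α) : Prop :=
  ∃ ρ ∈ R, ∃ j < ρ.conds.length, f = u ρ j ∧
    ∃ m, i = m + 1 ∧ m < (seqOf (ρ.Xset j)).length ∧ (seqOf (ρ.Xset j)).getD m 0 ∉ ρ.Zset j

theorem not_dropped_zero (u : ERule α → ℕ → α) (R : Set (ERule α)) (f : α) :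
    ¬ dropped u R 0 f := by
  rintro ⟨ρ, _, j, _, _, m, hm, _⟩
  omega

section PhiDef

variable (u : ERule α → ℕ → α) (R : Set (ERule α))

/-- the translation dropping the `X\Z` arguments of U symbols. -/
noncomputable def phi : Term α → Term α
  | .var x => .var x
  | .app f ts =>
      .app f (selFrom (fun i => dropped u R i f) 0 (ts.attach.map (fun t => phi t.1)))
decreasing_by
  simp only [Term.app.sizeOf_spec]
  have := List.sizeOf_lt_of_mem t.2
  omega

/-- liveness of a position w.r.t. the dropping translation. -/
def live : Pos → Term α → Prop
  | [], _ => True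
  | _ :: _, .var _ => False
  | i :: p, .app f ts => ¬ dropped u R i f ∧ ∃ w, ts[i]? = some w ∧ live p w

/-- translation of a (live) position. -/
noncomputable def phiPos : Pos → Term α → Pos
  | [], _ => []
  | _ :: _, .var _ => []
  | i :: p, .app f ts =>
      cnt (fun m => dropped u R m f) 0 i :: phiPos p (ts.getD i (.var 0))

end PhiDef

variable {u : ERule α → ℕ → α} {R : Set (ERule α)}

theorem phi_var (x : ℕ) : phi u R (Term.var x) = Term.var x := by rw [phi]

theorem phi_app (f : α) (ts : List (Term α)) :
    phi u R (Term.app f ts)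
      = Term.app f (selFrom (fun i => dropped u R i f) 0 (ts.map (phi u R))) := by
  rw [phi]
  congr 1
  congr 1
  exact List.attach_map_val

theorem live_nil (t : Term α) : live u R [] t := trivial

theorem live_cons_app {i : ℕ} {p : Pos} {f : α} {ts : List (Term α)} :
    live u R (i :: p) (Term.app f ts)
      ↔ ¬ dropped u R i f ∧ ∃ w, ts[i]? = some w ∧ live u R p w := Iff.rfl

theorem phiPos_nil (t : Term α) : phiPos u R [] t = [] := rfl

theorem phiPos_cons_app (i : ℕ) (p : Pos) (f : α) (ts : List (Term α)) :
    phiPos u R (i :: p) (Term.app f ts)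
      = cnt (fun m => dropped u R m f) 0 i :: phiPos u R p (ts.getD i (.var 0)) := rfl

/-- L1 -/
theorem sub?_phi : ∀ {p : Pos} {t v : Term α}, live u R p t → Term.sub? p t = some v →
    Term.sub? (phiPos u R p t) (phi u R t) = some (phi u R v) := by
  intro p
  induction p with
  | nil => intro t v _ h; cases h; rfl
  | cons i p ih =>
      intro t v hl h
      cases t with
      | var x => exact absurd h (by simp [sub?_cons_var])
      | app f ts =>
          obtain ⟨hd, c, hc, hlc⟩ := live_cons_app.1 hl
          rw [sub?_cons_app, hc, Option.bind_some] at h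
          have hlt : i < ts.length := by
            by_contra hle
            push_neg at hle
            rw [List.getElem?_eq_none hle] at hc; simp at hc
          rw [phiPos_cons_app, phi_app, sub?_cons_app]
          have hsel := selFrom_getElem? (fun m => dropped u R m f) (ts.map (phi u R)) 0 i
            (by simpa using hlt) (by simpa using hd)
          rw [hsel, List.getElem?_map, hc]
          simp only [Option.map_some, Option.bind_some]
          have : ts.getD i (.var 0) = c := by rw [List.getD_eq_getElem?_getD, hc]; rfl
          rw [this]
          exact ih hlc h

/-- L2 -/
theorem phi_replaceAt_live (w : Term α) : ∀ {p : Pos} {t v : Term α},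
    live u R p t → Term.sub? p t = some v →
    phi u R (Term.replaceAt w p t)
      = Term.replaceAt (phi u R w) (phiPos u R p t) (phi u R t) := by
  intro p
  induction p with
  | nil => intro t v _ _; rfl
  | cons i p ih =>
      intro t v hl h
      cases t with
      | var x => exact absurd h (by simp [sub?_cons_var])
      | app f ts =>
          obtain ⟨hd, c, hc, hlc⟩ := live_cons_app.1 hl
          rw [sub?_cons_app, hc, Option.bind_some] at h
          have hlt : i < ts.length := by
            by_contra hle
            push_neg at hle
            rw [List.getElem?_eq_none hle] at hc; simp at hc
          have hgetD : ts.getD i (.var 0) = c := by rw [List.getD_eq_getElem?_getD, hc]; rfl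
          have hsel := selFrom_getElem? (fun m => dropped u R m f) (ts.map (phi u R)) 0 i
            (by simpa using hlt) (by simpa using hd)
          have hselg : (selFrom (fun m => dropped u R m f) 0
              (ts.map (phi u R))).getD (cnt (fun m => dropped u R m f) 0 i) (.var 0)
                = phi u R c := by
            rw [List.getD_eq_getElem?_getD, hsel, List.getElem?_map, hc]; rfl
          rw [replaceAt_cons_app, phi_app, phi_app, phiPos_cons_app, replaceAt_cons_app]
          congr 1
          rw [List.map_set,
            selFrom_set_of_not (fun m => dropped u R m f) _ 0 i _ (by simpa using hlt)
              (by simpa using hd)]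
          rw [hselg, hgetD, ih hlc h]

/-- L3 -/
theorem phi_replaceAt_dead (w : Term α) : ∀ {p : Pos} {t v : Term α},
    ¬ live u R p t → Term.sub? p t = some v →
    phi u R (Term.replaceAt w p t) = phi u R t := by
  intro p
  induction p with
  | nil => intro t v hl _; exact absurd (live_nil t) hl
  | cons i p ih =>
      intro t v hl h
      cases t with
      | var x => exact absurd h (by simp [sub?_cons_var])
      | app f ts =>
          rw [sub?_cons_app] at h
          cases hc : ts[i]? with
          | none => rw [hc] at h; exact absurd h (by simp)
          | some c =>
              rw [hc, Option.bind_some] at h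
              have hlt : i < ts.length := by
                by_contra hle
                push_neg at hle
                rw [List.getElem?_eq_none hle] at hc; simp at hc
              have hgetD : ts.getD i (.var 0) = c := by
                rw [List.getD_eq_getElem?_getD, hc]; rfl
              rw [replaceAt_cons_app, phi_app, phi_app]
              congr 1
              by_cases hd : dropped u R i f
              · rw [List.map_set, selFrom_set_of_dropped _ _ 0 i _ (by simpa using hd)]
              · have hlc : ¬ live u R p c := by
                  intro hlc
                  exact hl (live_cons_app.2 ⟨hd, c, hc, hlc⟩)
                rw [hgetD, List.map_set, ih hlc h]
                congr 1
                apply List.ext_getElem?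
                intro j
                by_cases hj : j = i
                · subst hj
                  rw [List.getElem?_set_self (by simpa using hlt)]
                  rw [List.getElem?_map, hc]
                  rfl
                · rw [List.getElem?_set_ne (Ne.symm hj)]

theorem getD_of_getElem? {ts : List (Term α)} {i : ℕ} {c : Term α} (h : ts[i]? = some c) :
    ts.getD i (.var 0) = c := by rw [List.getD_eq_getElem?_getD, h]; rfl

/-- L4 -/
theorem phiPos_append : ∀ {p : Pos} (q : Pos) {t v : Term α},
    live u R p t → Term.sub? p t = some v →
    phiPos u R (p ++ q) t = phiPos u R p t ++ phiPos u R q v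
      ∧ (live u R (p ++ q) t ↔ live u R q v) := by
  intro p
  induction p with
  | nil => intro q t v _ h; cases h; exact ⟨rfl, Iff.rfl⟩
  | cons i p ih =>
      intro q t v hl h
      cases t with
      | var x => exact absurd h (by simp [sub?_cons_var])
      | app f ts =>
          obtain ⟨hd, c, hc, hlc⟩ := live_cons_app.1 hl
          rw [sub?_cons_app, hc, Option.bind_some] at h
          have hgetD := getD_of_getElem? hc
          obtain ⟨h1, h2⟩ := ih q hlc h
          constructor
          · simp only [List.cons_append, phiPos_cons_app, hgetD, h1]
          · rw [List.cons_append, live_cons_app]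
            constructor
            · rintro ⟨_, w, hw, hlw⟩
              rw [hc] at hw; cases hw
              exact h2.1 hlw
            · intro hq
              exact ⟨hd, c, hc, h2.2 hq⟩

theorem live_of_live_append {p q : Pos} {t : Term α} (h : live u R (p ++ q) t) :
    live u R p t := by
  induction p generalizing t with
  | nil => exact live_nil t
  | cons i p ih =>
      cases t with
      | var x => exact absurd h (by simp [List.cons_append]; exact fun h => h)
      | app f ts =>
          rw [List.cons_append, live_cons_app] at h
          obtain ⟨hd, w, hw, hlw⟩ := h
          exact live_cons_app.2 ⟨hd, w, hw, ih hlw⟩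

/-- L5 -/
theorem phiPos_not_prefix : ∀ {p q : Pos} {t : Term α},
    live u R p t → live u R q t → ¬ p <+: q →
    ¬ phiPos u R p t <+: phiPos u R q t := by
  intro p
  induction p with
  | nil => intro q t _ _ hpq; exact absurd (List.nil_prefix) hpq
  | cons i p ih =>
      intro q t hp hq hpq
      cases t with
      | var x => exact absurd hp (by exact fun h => h)
      | app f ts =>
          cases q with
          | nil =>
              rw [phiPos_cons_app, phiPos_nil]
              intro hpre
              exact absurd (List.prefix_nil.1 hpre) (by simp)
          | cons j q' =>
              obtain ⟨hdi, c, hci, hlci⟩ := live_cons_app.1 hp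
              obtain ⟨hdj, c', hcj, hlcj⟩ := live_cons_app.1 hq
              by_cases hij : i = j
              · subst hij
                have : ¬ p <+: q' := by
                  intro hpre
                  exact hpq (List.cons_prefix_cons.2 ⟨rfl, hpre⟩)
                rw [phiPos_cons_app, phiPos_cons_app]
                intro hpre
                obtain ⟨_, hpre'⟩ := List.cons_prefix_cons.1 hpre
                rw [hci] at hcj; cases hcj
                rw [getD_of_getElem? hci] at hpre'
                exact ih hlci hlcj this hpre'
              · rw [phiPos_cons_app, phiPos_cons_app]
                intro hpre
                obtain ⟨heq, _⟩ := List.cons_prefix_cons.1 hpre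
                exact cnt_inj (fun m => dropped u R m f) 0 (by simpa using hdi)
                  (by simpa using hdj) hij heq

/-- L6 -/
theorem phiPos_replaceAt_not_prefix (w : Term α) : ∀ {q p : Pos} {t v : Term α},
    ¬ p <+: q → Term.sub? p t = some v →
    phiPos u R q (Term.replaceAt w p t) = phiPos u R q t
      ∧ (live u R q (Term.replaceAt w p t) ↔ live u R q t) := by
  intro q
  induction q with
  | nil => intro p t v _ _; exact ⟨rfl, Iff.rfl⟩
  | cons j q' ih =>
      intro p t v hpq h
      cases p with
      | nil => exact absurd (List.nil_prefix) hpq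
      | cons i p' =>
          cases t with
          | var x => exact absurd h (by simp [sub?_cons_var])
          | app f ts =>
              rw [sub?_cons_app] at h
              cases hc : ts[i]? with
              | none => rw [hc] at h; exact absurd h (by simp)
              | some c =>
                  rw [hc, Option.bind_some] at h
                  have hlt : i < ts.length := by
                    by_contra hle
                    push_neg at hle
                    rw [List.getElem?_eq_none hle] at hc; simp at hc
                  have hgetD := getD_of_getElem? hc
                  rw [replaceAt_cons_app, hgetD]
                  by_cases hij : j = i
                  · subst hij
                    have hnp : ¬ p' <+: q' := by
                      intro hpre
                      exact hpq (List.cons_prefix_cons.2 ⟨rfl, hpre⟩)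
                    obtain ⟨h1, h2⟩ := ih hnp h
                    constructor
                    · rw [phiPos_cons_app, phiPos_cons_app, hgetD]
                      congr 1
                      rw [List.getD_eq_getElem?_getD,
                        List.getElem?_set_self (by simpa using hlt)]
                      exact h1
                    · rw [live_cons_app, live_cons_app]
                      constructor
                      · rintro ⟨hd, w', hw', hlw'⟩
                        rw [List.getElem?_set_self (by simpa using hlt)] at hw'
                        cases hw'
                        exact ⟨hd, c, hc, h2.1 hlw'⟩
                      · rintro ⟨hd, w', hw', hlw'⟩
                        rw [hc] at hw'; cases hw'
                        exact ⟨hd, _, List.getElem?_set_self (by simpa using hlt), h2.2 hlw'⟩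
                  · constructor
                    · rw [phiPos_cons_app, phiPos_cons_app]
                      congr 1
                      rw [List.getD_eq_getElem?_getD, List.getD_eq_getElem?_getD,
                        List.getElem?_set_ne (Ne.symm hij)]
                    · rw [live_cons_app, live_cons_app,
                        List.getElem?_set_ne (Ne.symm hij)]

/-- L7 -/
theorem phiPos_replaceAt_self (w : Term α) : ∀ {p : Pos} {t v : Term α},
    Term.sub? p t = some v →
    phiPos u R p (Term.replaceAt w p t) = phiPos u R p t
      ∧ (live u R p (Term.replaceAt w p t) ↔ live u R p t) := by
  intro p
  induction p with
  | nil => intro t v _; exact ⟨rfl, Iff.rfl⟩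
  | cons i p' ih =>
      intro t v h
      cases t with
      | var x => exact absurd h (by simp [sub?_cons_var])
      | app f ts =>
          rw [sub?_cons_app] at h
          cases hc : ts[i]? with
          | none => rw [hc] at h; exact absurd h (by simp)
          | some c =>
              rw [hc, Option.bind_some] at h
              have hlt : i < ts.length := by
                by_contra hle
                push_neg at hle
                rw [List.getElem?_eq_none hle] at hc; simp at hc
              have hgetD := getD_of_getElem? hc
              rw [replaceAt_cons_app, hgetD]
              obtain ⟨h1, h2⟩ := ih h
              constructor
              · rw [phiPos_cons_app, phiPos_cons_app, hgetD]
                congr 1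
                rw [List.getD_eq_getElem?_getD, List.getElem?_set_self (by simpa using hlt)]
                exact h1
              · rw [live_cons_app, live_cons_app]
                constructor
                · rintro ⟨hd, w', hw', hlw'⟩
                  rw [List.getElem?_set_self (by simpa using hlt)] at hw'
                  cases hw'
                  exact ⟨hd, c, hc, h2.1 hlw'⟩
                · rintro ⟨hd, w', hw', hlw'⟩
                  rw [hc] at hw'; cases hw'
                  exact ⟨hd, _, List.getElem?_set_self (by simpa using hlt), h2.2 hlw'⟩

end UoptSound
namespace UoptSound

open scoped Classical

variable {α : Type u} {u : ERule α → ℕ → α} {R : Set (ERule α)} {F : Set α}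

theorem not_dropped_F (hfresh : UFresh F u R) {f : α} (hf : f ∈ F) (i : ℕ) :
    ¬ dropped u R i f := by
  rintro ⟨ρ, hρ, j, hj, rfl, _⟩
  exact hfresh.1 ρ hρ j hj hf

theorem dropped_u_iff (hfresh : UFresh F u R) {ρ : ERule α} (hρ : ρ ∈ R) {j : ℕ}
    (hj : j < ρ.conds.length) (i : ℕ) :
    dropped u R i (u ρ j) ↔
      ∃ m, i = m + 1 ∧ m < (seqOf (ρ.Xset j)).length ∧
        (seqOf (ρ.Xset j)).getD m 0 ∉ ρ.Zset j := by
  constructor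
  · rintro ⟨ρ', hρ', j', hj', heq, hm⟩
    obtain ⟨rfl, rfl⟩ := hfresh.2 ρ' hρ' ρ hρ j' hj' j hj heq.symm
    exact hm
  · intro hm
    exact ⟨ρ, hρ, j, hj, rfl, hm⟩

theorem subst_id : ∀ t : Term α, t.subst Term.var = t := by
  apply Term.ind'
  · intro x; rw [subst_var]
  · intro f ts ih
    rw [subst_app]
    congr 1
    conv_rhs => rw [← List.map_id ts]
    exact List.map_congr_left ih

theorem phi_overF (hfresh : UFresh F u R) : ∀ {t : Term α}, t.overSig F → phi u R t = t := by
  have : ∀ t : Term α, t.overSig F → phi u R t = t := by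
    apply Term.ind'
    · intro x _; exact phi_var x
    · intro f ts ih h
      obtain ⟨hf, hts⟩ := overSig_app.1 h
      rw [phi_app, selFrom_id _ (fun i => not_dropped_F hfresh hf i)]
      congr 1
      conv_rhs => rw [← List.map_id ts]
      exact List.map_congr_left (fun a ha => ih a ha (hts a ha))
  exact fun {t} ht => this t ht

theorem subst_phi_overF (hfresh : UFresh F u R) (σ : ℕ → Term α) :
    ∀ {t : Term α}, t.overSig F → phi u R (t.subst σ) = t.subst (fun x => phi u R (σ x)) := by
  have : ∀ t : Term α, t.overSig F →
      phi u R (t.subst σ) = t.subst (fun x => phi u R (σ x)) := by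
    apply Term.ind'
    · intro x _; rw [subst_var, subst_var]
    · intro f ts ih h
      obtain ⟨hf, hts⟩ := overSig_app.1 h
      rw [subst_app, phi_app, selFrom_id _ (fun i => not_dropped_F hfresh hf i), subst_app,
        List.map_map]
      congr 1
      exact List.map_congr_left (fun a ha => ih a ha (hts a ha))
  exact fun {t} ht => this t ht

/-- pattern lemma for over-`F` patterns -/
theorem pat_overF (hfresh : UFresh F u R) (σ : ℕ → Term α) :
    ∀ {q : Pos} {w v : Term α}, w.overSig F → Term.sub? q w = some v →
      live u R q (w.subst σ) ∧ phiPos u R q (w.subst σ) = q := by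
  intro q
  induction q with
  | nil => intro w v _ _; exact ⟨trivial, rfl⟩
  | cons i q' ih =>
      intro w v hw h
      cases w with
      | var x => exact absurd h (by simp [sub?_cons_var])
      | app g us =>
          obtain ⟨hg, hus⟩ := overSig_app.1 hw
          rw [sub?_cons_app] at h
          cases hc : us[i]? with
          | none => rw [hc] at h; exact absurd h (by simp)
          | some c =>
              rw [hc, Option.bind_some] at h
              have hcF : c.overSig F := hus c (List.mem_of_getElem? hc)
              obtain ⟨h1, h2⟩ := ih hcF h
              rw [subst_app]
              constructor
              · exact live_cons_app.2 ⟨not_dropped_F hfresh hg i,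
                  c.subst σ, by rw [List.getElem?_map, hc]; rfl, h1⟩
              · rw [phiPos_cons_app]
                congr 1
                · exact cnt_id _ (fun m => not_dropped_F hfresh hg m) 0 i
                · rw [List.getD_eq_getElem?_getD, List.getElem?_map, hc]
                  exact h2

/-! ### mkU lemmas -/

theorem subst_mkU (f : α) (w : Term α) (xs : List ℕ) (σ : ℕ → Term α) :
    (mkU f w xs).subst σ = Term.app f (w.subst σ :: xs.map σ) := by
  rw [mkU, subst_app]
  simp only [List.map_cons, List.map_map]
  congr 2
  exact List.map_congr_left (fun x _ => subst_var σ x)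

theorem sub?_mkU {f : α} {w : Term α} {xs : List ℕ} :
    ∀ {q : Pos} {v : Term α}, Term.sub? q (mkU f w xs) = some v →
      (q = [] ∧ v = mkU f w xs) ∨ (∃ q', q = 0 :: q' ∧ Term.sub? q' w = some v) ∨
      (∃ m, m < xs.length ∧ q = [m+1] ∧ v = Term.var (xs.getD m 0)) := by
  intro q v h
  cases q with
  | nil => exact Or.inl ⟨rfl, by cases h; rfl⟩
  | cons i q' =>
      rw [mkU, sub?_cons_app] at h
      cases i with
      | zero =>
          rw [List.getElem?_cons_zero, Option.bind_some] at h
          exact Or.inr (Or.inl ⟨q', rfl, h⟩)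
      | succ m =>
          rw [List.getElem?_cons_succ, List.getElem?_map] at h
          cases hc : xs[m]? with
          | none => rw [hc] at h; exact absurd h (by simp)
          | some x =>
              rw [hc] at h
              simp only [Option.map_some, Option.bind_some] at h
              cases q' with
              | nil =>
                  cases h
                  refine Or.inr (Or.inr ⟨m, ?_, rfl, ?_⟩)
                  · by_contra hle
                    push_neg at hle
                    rw [List.getElem?_eq_none hle] at hc; simp at hc
                  · rw [List.getD_eq_getElem?_getD, hc]
                    rfl
              | cons j q'' => exact absurd h (by simp [sub?_cons_var])

theorem seqOf_filter {X Z : Finset ℕ} (h : Z ⊆ X) :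
    (seqOf X).filter (fun a => a ∈ Z) = seqOf Z := by
  unfold seqOf
  refine (fun hp h1 h2 => List.Perm.eq_of_pairwise' (r := (· ≤ ·)) h1 h2 hp) ?_ ?_ ?_
  · rw [List.perm_ext_iff_of_nodup (List.Nodup.filter _ (Finset.sort_nodup _ _))
      (Finset.sort_nodup _ _)]
    intro a
    simp only [List.mem_filter, seqOf, Finset.mem_sort, decide_eq_true_eq]
    exact ⟨fun ⟨_, hz⟩ => hz, fun hz => ⟨h hz, hz⟩⟩
  · exact (Finset.pairwise_sort _ _).filter _
  · exact Finset.pairwise_sort _ _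

theorem Zset_subset_Xset (ρ : ERule α) (j : ℕ) : ρ.Zset j ⊆ ρ.Xset j :=
  Finset.inter_subset_left

theorem phi_subst_mkU (hfresh : UFresh F u R) {ρ : ERule α} (hρ : ρ ∈ R) {j : ℕ}
    (hj : j < ρ.conds.length) {w : Term α} (hw : w.overSig F) (σ : ℕ → Term α) :
    phi u R ((mkU (u ρ j) w (seqOf (ρ.Xset j))).subst σ)
      = (mkU (u ρ j) w (seqOf (ρ.Zset j))).subst (fun x => phi u R (σ x)) := by
  rw [subst_mkU, subst_mkU, phi_app]
  congr 1
  rw [List.map_cons, selFrom_cons, if_neg (by simpa using not_dropped_zero u R (u ρ j))]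
  congr 1
  · exact subst_phi_overF hfresh σ hw
  · rw [List.map_map]
    simp only [Function.comp_def, Nat.zero_add]
    have key : ∀ (xs : List ℕ) (n : ℕ),
        (∀ m, m < xs.length → (dropped u R (n + m) (u ρ j) ↔ xs.getD m 0 ∉ ρ.Zset j)) →
        selFrom (fun i => dropped u R i (u ρ j)) n (xs.map (fun x => phi u R (σ x)))
          = (xs.filter (fun a => a ∈ ρ.Zset j)).map (fun x => phi u R (σ x)) := by
      intro xs
      induction xs with
      | nil => intro n _; rfl
      | cons x xs ihx =>
          intro n hch
          rw [List.map_cons, selFrom_cons]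
          have h0 := hch 0 (by simp)
          simp only [Nat.add_zero, List.getD_cons_zero] at h0
          by_cases hz : x ∈ ρ.Zset j
          · rw [if_neg (by rw [h0]; simpa using hz), List.filter_cons_of_pos (by simpa using hz),
              List.map_cons]
            congr 1
            exact ihx (n+1) (fun m hm => by
              have h2 := hch (m+1) (by simpa using hm)
              have h3 : n + (m+1) = n + 1 + m := by omega
              rw [h3] at h2
              simpa using h2)
          · rw [if_pos (by rw [h0]; simpa using hz), List.filter_cons_of_neg (by simpa using hz)]
            exact ihx (n+1) (fun m hm => by
              have h2 := hch (m+1) (by simpa using hm)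
              have h3 : n + (m+1) = n + 1 + m := by omega
              rw [h3] at h2
              simpa using h2)
    rw [key (seqOf (ρ.Xset j)) 1 ?_, seqOf_filter (Zset_subset_Xset ρ j)]
    intro m hm
    rw [dropped_u_iff hfresh hρ hj]
    constructor
    · rintro ⟨m', hmm, _, hz⟩
      have : m' = m := by omega
      subst this; exact hz
    · intro hz; exact ⟨m, by omega, hm, hz⟩

end UoptSound
namespace UoptSound

open scoped Classical

variable {α : Type u} {u : ERule α → ℕ → α} {R : Set (ERule α)} {F : Set α}

theorem cnt_char (P : ℕ → Prop) (X : List ℕ) (Z : Finset ℕ)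
    (hch : ∀ i, i < X.length → (P (i+1) ↔ X.getD i 0 ∉ Z)) (hP0 : ¬ P 0) :
    ∀ m, m ≤ X.length →
      cnt P 0 (m+1) = 1 + ((X.take m).filter (fun a => a ∈ Z)).length := by
  intro m
  induction m with
  | zero =>
      intro _
      rw [cnt_succ, if_neg (by simpa using hP0)]
      rfl
  | succ m ih =>
      intro hm
      have hmlt : m < X.length := by omega
      rw [cnt_succ, ih (by omega)]
      simp only [Nat.zero_add]
      have h2 : X[m]? = some (X.getD m 0) := by
        rw [List.getElem?_eq_getElem hmlt, List.getD_eq_getElem _ _ hmlt]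
      rw [List.take_succ, h2, List.filter_append]
      simp only [Option.toList_some, List.length_append]
      have hch' := hch m hmlt
      generalize hgen : X.getD m 0 = x at hch' ⊢
      by_cases hz : x ∈ Z
      · rw [if_neg (fun hP => (hch'.1 hP) hz)]
        have hone : (List.filter (fun a => a ∈ Z) [x]).length = 1 := by simp [hz]
        omega
      · rw [if_pos (hch'.2 hz)]
        have hzero : (List.filter (fun a => a ∈ Z) [x]).length = 0 := by simp [hz]
        omega

theorem filter_getElem_at (X : List ℕ) (Z : Finset ℕ) {m : ℕ} (hm : m < X.length)
    (hz : X.getD m 0 ∈ Z) :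
    (X.filter (fun a => a ∈ Z))[((X.take m).filter (fun a => a ∈ Z)).length]?
      = some (X.getD m 0) := by
  have hx : X[m] = X.getD m 0 := (List.getD_eq_getElem _ _ hm).symm
  have hsplit : X.filter (fun a => a ∈ Z)
      = (X.take m).filter (fun a => a ∈ Z)
        ++ X[m] :: (X.drop (m+1)).filter (fun a => a ∈ Z) := by
    conv_lhs => rw [← List.take_append_drop m X]
    rw [List.filter_append, List.drop_eq_getElem_cons hm,
      List.filter_cons_of_pos (by rw [hx]; exact decide_eq_true hz)]
  rw [hsplit, List.getElem?_append_right (le_refl _)]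
  simp only [Nat.sub_self, List.getElem?_cons_zero, hx]

section Slot

variable {ρ : ERule α} {j : ℕ}

theorem mem_Xset_of_getD {m : ℕ} (hm : m < (seqOf (ρ.Xset j)).length) :
    (seqOf (ρ.Xset j)).getD m 0 ∈ ρ.Xset j := by
  rw [List.getD_eq_getElem _ _ hm]
  have := List.getElem_mem hm
  unfold seqOf at this
  rwa [Finset.mem_sort] at this

theorem live_slot_iff (hfresh : UFresh F u R) (hρ : ρ ∈ R) (hj : j < ρ.conds.length)
    {m : ℕ} (hm : m < (seqOf (ρ.Xset j)).length) (w : Term α) (σ : ℕ → Term α) :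
    live u R [m+1] ((mkU (u ρ j) w (seqOf (ρ.Xset j))).subst σ)
      ↔ (seqOf (ρ.Xset j)).getD m 0 ∈ ρ.Zset j := by
  rw [subst_mkU, live_cons_app]
  have harg : (w.subst σ :: ((seqOf (ρ.Xset j)).map σ))[m+1]?
      = some (σ ((seqOf (ρ.Xset j)).getD m 0)) := by
    rw [List.getElem?_cons_succ, List.getElem?_map, List.getElem?_eq_getElem hm,
      List.getD_eq_getElem _ _ hm]
    rfl
  constructor
  · rintro ⟨hd, _, _, _⟩
    by_contra hz
    exact hd ((dropped_u_iff hfresh hρ hj _).2 ⟨m, rfl, hm, hz⟩)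
  · intro hz
    refine ⟨?_, _, harg, trivial⟩
    rw [dropped_u_iff hfresh hρ hj]
    rintro ⟨m', hmm, _, hz'⟩
    have : m' = m := by omega
    subst this
    exact hz' hz

theorem phiPos_slot (hfresh : UFresh F u R) (hρ : ρ ∈ R) (hj : j < ρ.conds.length)
    {m : ℕ} (hm : m < (seqOf (ρ.Xset j)).length)
    (hz : (seqOf (ρ.Xset j)).getD m 0 ∈ ρ.Zset j) (w : Term α) (σ : ℕ → Term α) :
    Term.sub? (phiPos u R [m+1] ((mkU (u ρ j) w (seqOf (ρ.Xset j))).subst σ))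
        (mkU (u ρ j) w (seqOf (ρ.Zset j)))
      = some (.var ((seqOf (ρ.Xset j)).getD m 0)) := by
  rw [subst_mkU, phiPos_cons_app, phiPos_nil]
  have hcnt := cnt_char (fun i => dropped u R i (u ρ j)) (seqOf (ρ.Xset j)) (ρ.Zset j)
    (fun i hi => by
      show dropped u R (i+1) (u ρ j) ↔ (seqOf (ρ.Xset j)).getD i 0 ∉ ρ.Zset j
      rw [dropped_u_iff hfresh hρ hj]
      constructor
      · rintro ⟨m', hmm, _, hz'⟩
        have : m' = i := by omega
        subst this; exact hz'
      · intro hz'; exact ⟨i, rfl, hi, hz'⟩)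
    (not_dropped_zero u R _) m (by omega)
  rw [hcnt, Nat.add_comm 1, mkU, sub?_cons_app, List.getElem?_cons_succ, List.getElem?_map]
  have : seqOf (ρ.Zset j) = (seqOf (ρ.Xset j)).filter (fun a => a ∈ ρ.Zset j) :=
    (seqOf_filter (Zset_subset_Xset ρ j)).symm
  rw [this, filter_getElem_at _ _ hm hz]
  rfl

/-- pattern lemma: non-variable positions of `mkU` patterns -/
theorem pat_mkU_F (hfresh : UFresh F u R) (hρ : ρ ∈ R) (hj : j < ρ.conds.length)
    {w : Term α} (hw : w.overSig F) (σ : ℕ → Term α) {q : Pos} {g : α} {ts : List (Term α)}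
    (h : Term.sub? q (mkU (u ρ j) w (seqOf (ρ.Xset j))) = some (.app g ts)) :
    live u R q ((mkU (u ρ j) w (seqOf (ρ.Xset j))).subst σ)
      ∧ phiPos u R q ((mkU (u ρ j) w (seqOf (ρ.Xset j))).subst σ) = q
      ∧ ∃ g' ts', Term.sub? q (mkU (u ρ j) w (seqOf (ρ.Zset j))) = some (.app g' ts') := by
  rcases sub?_mkU h with ⟨rfl, _⟩ | ⟨q', rfl, hq'⟩ | ⟨m, hm, rfl, hv⟩
  · exact ⟨trivial, rfl, u ρ j, _, rfl⟩
  · obtain ⟨h1, h2⟩ := pat_overF hfresh σ hw hq'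
    rw [subst_mkU]
    refine ⟨live_cons_app.2 ⟨not_dropped_zero u R _, w.subst σ, List.getElem?_cons_zero, h1⟩, ?_, ?_⟩
    · rw [phiPos_cons_app]
      have : cnt (fun m => dropped u R m (u ρ j)) 0 0 = 0 := rfl
      rw [this, List.getD_cons_zero, h2]
    · exact ⟨g, ts, by rw [mkU, sub?_cons_app, List.getElem?_cons_zero, Option.bind_some]; exact hq'⟩
  · exact absurd hv (by simp)

/-- pattern lemma: variable positions of `mkU` right-hand sides -/
theorem pat_mkU_V (hfresh : UFresh F u R) (hρ : ρ ∈ R) (hj : j < ρ.conds.length)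
    {w : Term α} (hw : w.overSig F) (σ : ℕ → Term α) {q : Pos} {x : ℕ}
    (h : Term.sub? q (mkU (u ρ j) w (seqOf (ρ.Xset j))) = some (.var x))
    (hl : live u R q ((mkU (u ρ j) w (seqOf (ρ.Xset j))).subst σ)) :
    Term.sub? (phiPos u R q ((mkU (u ρ j) w (seqOf (ρ.Xset j))).subst σ))
        (mkU (u ρ j) w (seqOf (ρ.Zset j))) = some (.var x)
      ∧ (x ∈ w.varFinset ∨ x ∈ ρ.Zset j) := by
  rcases sub?_mkU h with ⟨rfl, hv⟩ | ⟨q', rfl, hq'⟩ | ⟨m, hm, rfl, hv⟩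
  · exact absurd hv (by simp [mkU])
  · obtain ⟨h1, h2⟩ := pat_overF hfresh σ hw hq'
    rw [subst_mkU, phiPos_cons_app]
    have hc0 : cnt (fun m => dropped u R m (u ρ j)) 0 0 = 0 := rfl
    rw [hc0, List.getD_cons_zero, h2]
    refine ⟨by rw [mkU, sub?_cons_app, List.getElem?_cons_zero, Option.bind_some]; exact hq',
      Or.inl (var_mem_of_sub? hq')⟩
  · cases hv
    have hz := (live_slot_iff hfresh hρ hj hm w σ).1 hl
    exact ⟨phiPos_slot hfresh hρ hj hm hz w σ, Or.inr hz⟩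

/-- pattern lemma: variable positions of `mkU` left-hand sides -/
theorem pat_mkU_V_lhs (hfresh : UFresh F u R) (hρ : ρ ∈ R) (hj : j < ρ.conds.length)
    {w : Term α} (hw : w.overSig F) (σ : ℕ → Term α) {q : Pos} {x : ℕ}
    (h : Term.sub? q (mkU (u ρ j) w (seqOf (ρ.Xset j))) = some (.var x))
    (hx : x ∈ ρ.Yset j) :
    live u R q ((mkU (u ρ j) w (seqOf (ρ.Xset j))).subst σ)
      ∧ Term.sub? (phiPos u R q ((mkU (u ρ j) w (seqOf (ρ.Xset j))).subst σ))
          (mkU (u ρ j) w (seqOf (ρ.Zset j))) = some (.var x) := by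
  rcases sub?_mkU h with ⟨rfl, hv⟩ | ⟨q', rfl, hq'⟩ | ⟨m, hm, rfl, hv⟩
  · exact absurd hv (by simp [mkU])
  · obtain ⟨h1, h2⟩ := pat_overF hfresh σ hw hq'
    rw [subst_mkU]
    refine ⟨live_cons_app.2 ⟨not_dropped_zero u R _, w.subst σ, List.getElem?_cons_zero, h1⟩, ?_⟩
    rw [phiPos_cons_app]
    have hc0 : cnt (fun m => dropped u R m (u ρ j)) 0 0 = 0 := rfl
    rw [hc0, List.getD_cons_zero, h2, mkU, sub?_cons_app, List.getElem?_cons_zero,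
      Option.bind_some]
    exact hq'
  · cases hv
    have hz : (seqOf (ρ.Xset j)).getD m 0 ∈ ρ.Zset j := by
      rw [ERule.Zset, Finset.mem_inter]
      exact ⟨mem_Xset_of_getD hm, hx⟩
    exact ⟨(live_slot_iff hfresh hρ hj hm w σ).2 hz, phiPos_slot hfresh hρ hj hm hz w σ⟩

/-! ### Yset inclusions -/

theorem rhs_subset_Yset (ρ : ERule α) (j : ℕ) : ρ.rhs.varFinset ⊆ ρ.Yset j :=
  fun x hx => Finset.mem_union_left _ (Finset.mem_union_left _ hx)

theorem tj_subset_Yset (ρ : ERule α) (j : ℕ) :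
    (ρ.conds.getD j junkPair).2.varFinset ⊆ ρ.Yset j :=
  fun x hx => Finset.mem_union_left _ (Finset.mem_union_right _ hx)

theorem condPair_subset_Yset (ρ : ERule α) {j m : ℕ} (hm : j + 1 ≤ m)
    (hmk : m < ρ.conds.length) (x : ℕ)
    (hx : x ∈ (ρ.conds.getD m junkPair).1.varFinset
        ∨ x ∈ (ρ.conds.getD m junkPair).2.varFinset) :
    x ∈ ρ.Yset j := by
  apply Finset.mem_union_right
  rw [mem_foldr_union]
  refine ⟨(ρ.conds.getD m junkPair).1.varFinset ∪ (ρ.conds.getD m junkPair).2.varFinset, ?_, ?_⟩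
  · apply List.mem_map_of_mem
    have hlt : m - (j+1) < (ρ.conds.drop (j+1)).length := by
      rw [List.length_drop]; omega
    have : (ρ.conds.drop (j+1))[m - (j+1)] = ρ.conds[m] := by
      rw [List.getElem_drop]
      congr 1
      omega
    have hmem := List.getElem_mem hlt
    rw [this] at hmem
    rwa [List.getD_eq_getElem _ _ hmk]
  · rcases hx with hx | hx
    · exact Finset.mem_union_left _ hx
    · exact Finset.mem_union_right _ hx

theorem Yset_succ_subset (ρ : ERule α) {j : ℕ} (hj : j + 1 < ρ.conds.length) :
    ρ.Yset (j+1) ⊆ ρ.Yset j := by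
  intro x hx
  rw [ERule.Yset] at hx
  rcases Finset.mem_union.1 hx with hx | hx
  · rcases Finset.mem_union.1 hx with hx | hx
    · exact rhs_subset_Yset ρ j hx
    · exact condPair_subset_Yset ρ (le_refl _) hj x (Or.inr hx)
  · rw [mem_foldr_union] at hx
    obtain ⟨s, hs, hxs⟩ := hx
    rcases List.mem_map.1 hs with ⟨c, hc, rfl⟩
    have hc' : c ∈ ρ.conds.drop (j+1) := by
      have : ρ.conds.drop (j+1+1) = (ρ.conds.drop (j+1)).drop 1 := by
        rw [List.drop_drop]
      rw [this] at hc
      exact List.mem_of_mem_drop hc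
    apply Finset.mem_union_right
    rw [mem_foldr_union]
    exact ⟨_, List.mem_map_of_mem hc', hxs⟩

theorem Zset_subset_Yset (ρ : ERule α) (j : ℕ) : ρ.Zset j ⊆ ρ.Yset j :=
  Finset.inter_subset_right

end Slot

end UoptSound
namespace UoptSound

open scoped Classical

variable {α : Type u} {u : ERule α → ℕ → α} {R : Set (ERule α)} {F : Set α}

/-- the facts we need about the left-hand side of an unraveled rule and its
optimized counterpart -/
def LhsOK (u : ERule α → ℕ → α) (R : Set (ERule α)) (Y : Finset ℕ) (W W' : Term α) : Prop :=
  (∀ σ, phi u R (W.subst σ) = W'.subst (fun x => phi u R (σ x))) ∧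
  (∀ σ (q : Pos) (x : ℕ), Term.sub? q W = some (.var x) → x ∈ Y →
     live u R q (W.subst σ) ∧
       Term.sub? (phiPos u R q (W.subst σ)) W' = some (.var x))

/-- the facts we need about the right-hand side of an unraveled rule and its
optimized counterpart -/
def RhsOK (u : ERule α → ℕ → α) (R : Set (ERule α)) (Y : Finset ℕ) (W W' : Term α) : Prop :=
  (∀ σ, phi u R (W.subst σ) = W'.subst (fun x => phi u R (σ x))) ∧
  (∀ σ (q : Pos) (g : α) (ts : List (Term α)), Term.sub? q W = some (.app g ts) →
     live u R q (W.subst σ) ∧ phiPos u R q (W.subst σ) = q ∧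
       ∃ g' ts', Term.sub? q W' = some (.app g' ts')) ∧
  (∀ σ (q : Pos) (x : ℕ), Term.sub? q W = some (.var x) → live u R q (W.subst σ) →
     Term.sub? (phiPos u R q (W.subst σ)) W' = some (.var x) ∧ x ∈ Y)

theorem lhsOK_overF (hfresh : UFresh F u R) {W : Term α} (hW : W.overSig F) (Y : Finset ℕ) :
    LhsOK u R Y W W := by
  refine ⟨fun σ => subst_phi_overF hfresh σ hW, fun σ q x h _ => ?_⟩
  obtain ⟨h1, h2⟩ := pat_overF hfresh σ hW h
  exact ⟨h1, by rw [h2]; exact h⟩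

theorem lhsOK_mkU (hfresh : UFresh F u R) {ρ : ERule α} (hρ : ρ ∈ R) {j : ℕ}
    (hj : j < ρ.conds.length) {w : Term α} (hw : w.overSig F) {Y : Finset ℕ}
    (hY : Y ⊆ ρ.Yset j) :
    LhsOK u R Y (mkU (u ρ j) w (seqOf (ρ.Xset j))) (mkU (u ρ j) w (seqOf (ρ.Zset j))) := by
  refine ⟨fun σ => phi_subst_mkU hfresh hρ hj hw σ, fun σ q x h hx => ?_⟩
  exact pat_mkU_V_lhs hfresh hρ hj hw σ h (hY hx)

theorem rhsOK_overF (hfresh : UFresh F u R) {W : Term α} (hW : W.overSig F) {Y : Finset ℕ}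
    (hY : W.varFinset ⊆ Y) : RhsOK u R Y W W := by
  refine ⟨fun σ => subst_phi_overF hfresh σ hW, fun σ q g ts h => ?_, fun σ q x h _ => ?_⟩
  · obtain ⟨h1, h2⟩ := pat_overF hfresh σ hW h
    exact ⟨h1, h2, g, ts, h⟩
  · obtain ⟨h1, h2⟩ := pat_overF hfresh σ hW h
    exact ⟨by rw [h2]; exact h, hY (var_mem_of_sub? h)⟩

theorem rhsOK_mkU (hfresh : UFresh F u R) {ρ : ERule α} (hρ : ρ ∈ R) {j : ℕ}
    (hj : j < ρ.conds.length) {w : Term α} (hw : w.overSig F) {Y : Finset ℕ}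
    (hY1 : w.varFinset ⊆ Y) (hY2 : ρ.Zset j ⊆ Y) :
    RhsOK u R Y (mkU (u ρ j) w (seqOf (ρ.Xset j))) (mkU (u ρ j) w (seqOf (ρ.Zset j))) := by
  refine ⟨fun σ => phi_subst_mkU hfresh hρ hj hw σ, fun σ q g ts h => ?_, fun σ q x h hl => ?_⟩
  · exact pat_mkU_F hfresh hρ hj hw σ h
  · obtain ⟨h1, h2⟩ := pat_mkU_V hfresh hρ hj hw σ h hl
    refine ⟨h1, ?_⟩
    rcases h2 with h2 | h2
    · exact hY1 h2
    · exact hY2 h2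

theorem overSig_cond (hsig : ∀ ρ ∈ R, ρ.overSig F) {ρ : ERule α} (hρ : ρ ∈ R) {m : ℕ}
    (hm : m < ρ.conds.length) :
    (ρ.conds.getD m junkPair).1.overSig F ∧ (ρ.conds.getD m junkPair).2.overSig F := by
  have hmem : ρ.conds.getD m junkPair ∈ ρ.conds := by
    rw [List.getD_eq_getElem _ _ hm]
    exact List.getElem_mem hm
  exact (hsig ρ hρ).2.2 _ hmem

theorem conds_unravelWith {carry : ℕ → List ℕ} {u' : ℕ → α} {ρ q : ERule α}
    (h : q ∈ unravelWith carry u' ρ) : q.conds = [] := by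
  rw [unravelWith] at h
  obtain ⟨j, _, rfl⟩ := List.mem_map.1 h
  rfl

/-- the main per-rule correspondence -/
theorem rule_pkg (hfresh : UFresh F u R) (hsig : ∀ ρ ∈ R, ρ.overSig F) {ρ : ERule α}
    (hρ : ρ ∈ R) {qr : ERule α} (hq : qr ∈ unravelU (u ρ) ρ) :
    ∃ qo ∈ unravelOpt (u ρ) ρ, qo.conds = [] ∧ qr.conds = [] ∧
      ∃ Y, LhsOK u R Y qr.lhs qo.lhs ∧ RhsOK u R Y qr.rhs qo.rhs := by
  rw [unravelU, unravelWith] at hq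
  obtain ⟨j, hjmem, rfl⟩ := List.mem_map.1 hq
  rw [List.mem_range] at hjmem
  refine ⟨_, List.mem_map_of_mem (List.mem_range.2 hjmem), rfl, rfl, ?_⟩
  simp only
  by_cases hj0 : j = 0
  · subst hj0
    simp only [if_pos rfl]
    by_cases hjk : 0 < ρ.conds.length
    · rw [if_pos hjk, if_pos hjk]
      refine ⟨(ρ.conds.getD 0 junkPair).1.varFinset ∪ ρ.Zset 0, ?_, ?_⟩
      · exact lhsOK_overF hfresh (hsig ρ hρ).1 _
      · exact rhsOK_mkU hfresh hρ hjk (overSig_cond hsig hρ hjk).1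
          Finset.subset_union_left Finset.subset_union_right
    · rw [if_neg hjk, if_neg hjk]
      exact ⟨ρ.rhs.varFinset, lhsOK_overF hfresh (hsig ρ hρ).1 _,
        rhsOK_overF hfresh (hsig ρ hρ).2.1 (le_refl _)⟩
  · have hj1 : 1 ≤ j := by omega
    have hjk' : j - 1 < ρ.conds.length := by omega
    rw [if_neg hj0, if_neg hj0]
    by_cases hjk : j < ρ.conds.length
    · rw [if_pos hjk, if_pos hjk]
      refine ⟨ρ.Yset (j-1), ?_, ?_⟩
      · exact lhsOK_mkU hfresh hρ hjk' (overSig_cond hsig hρ hjk').2 (le_refl _)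
      · refine rhsOK_mkU hfresh hρ hjk (overSig_cond hsig hρ hjk).1 ?_ ?_
        · intro x hx
          exact condPair_subset_Yset ρ (by omega) hjk x (Or.inl hx)
        · intro x hx
          have h1 : ρ.Zset j ⊆ ρ.Yset j := Zset_subset_Yset ρ j
          have h2 : ρ.Yset j ⊆ ρ.Yset (j-1) := by
            have : j - 1 + 1 = j := by omega
            rw [← this] at hjk ⊢
            exact Yset_succ_subset ρ hjk
          exact h2 (h1 hx)
    · rw [if_neg hjk, if_neg hjk]
      refine ⟨ρ.Yset (j-1), ?_, ?_⟩
      · exact lhsOK_mkU hfresh hρ hjk' (overSig_cond hsig hρ hjk').2 (le_refl _)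
      · exact rhsOK_overF hfresh (hsig ρ hρ).2.1 (rhs_subset_Yset ρ (j-1))

end UoptSound
namespace UoptSound

open scoped Classical

variable {α : Type u} {u : ERule α → ℕ → α} {R : Set (ERule α)} {F : Set α}

theorem evseq_sim (hfresh : UFresh F u R) (hsig : ∀ ρ ∈ R, ρ.overSig F)
    {T : Term α → Prop} {B : Set Pos} {s t : Term α}
    (h : EVSeq (USys u R) T B s t) :
    ∀ {B' : Set Pos}, (∀ q ∈ B, live u R q s → phiPos u R q s ∈ B') →
      EVSeq (UoptSys u R) (fun _ => True) B' (phi u R s) (phi u R t) := by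
  induction h with
  | refl B t => intro B' _; exact EVSeq.refl _ _
  | @step B s s' t p ρr σ hρr hconds hsub hs' hpB hT hrest ih =>
      intro B' hinv
      subst hs'
      obtain ⟨ρ, hρ, hq⟩ := hρr
      obtain ⟨qo, hqomem, hqoconds, _, Y, hL, hR⟩ := rule_pkg hfresh hsig hρ hq
      have hsubs' : Term.sub? p (Term.replaceAt (ρr.rhs.subst σ) p s)
          = some (ρr.rhs.subst σ) := sub?_replaceAt_self _ hsub
      obtain ⟨hpos7, hlive7⟩ := phiPos_replaceAt_self (ρr.rhs.subst σ) hsub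
      by_cases hlive : live u R p s
      · -- the contracted position is kept
        have hsub' : Term.sub? (phiPos u R p s) (phi u R s)
            = some (qo.lhs.subst (fun x => phi u R (σ x))) := by
          rw [← hL.1 σ]
          exact sub?_phi hlive hsub
        have hs'' : phi u R (Term.replaceAt (ρr.rhs.subst σ) p s)
            = Term.replaceAt (qo.rhs.subst (fun x => phi u R (σ x)))
                (phiPos u R p s) (phi u R s) := by
          rw [phi_replaceAt_live _ hlive hsub, hR.1 σ]
        refine EVSeq.step (phiPos u R p s) qo (fun x => phi u R (σ x)) ⟨ρ, hρ, hqomem⟩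
          hqoconds hsub' hs'' (hinv p hpB hlive) (fun x _ => trivial) ?_
        apply ih
        -- the transported invariant
        intro q hqmem hqlive
        simp only [nextB, Set.mem_union, Set.mem_setOf_eq] at hqmem
        rcases hqmem with (⟨hqB, hnp⟩ | ⟨q', hq', rfl⟩) | ⟨pv, p', q'', hpv, heq, hBmem, rfl⟩
        · -- positions untouched by the step
          obtain ⟨hposeq, hliveiff⟩ := phiPos_replaceAt_not_prefix (ρr.rhs.subst σ) hnp hsub
          have hqlives : live u R q s := hliveiff.1 hqlive
          rw [hposeq]
          exact Or.inl (Or.inl ⟨hinv q hqB hqlives, phiPos_not_prefix hlive hqlives hnp⟩)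
        · -- positions created from the right-hand side
          obtain ⟨g, ts, hq'sub⟩ := hq'
          obtain ⟨hliveq', hphiq', g', ts', hq'opt⟩ := hR.2.1 σ q' g ts hq'sub
          have hlp : live u R p (Term.replaceAt (ρr.rhs.subst σ) p s) := hlive7.2 hlive
          obtain ⟨hsplit, _⟩ := phiPos_append q' hlp hsubs'
          rw [hsplit, hpos7, hphiq']
          exact Or.inl (Or.inr ⟨q', ⟨g', ts', hq'opt⟩, rfl⟩)
        · -- positions tracked through a variable of the rule
          obtain ⟨x, hpvsub⟩ := hpv
          have hp'sub : Term.sub? p' ρr.rhs = some (Term.var x) := by rw [← heq]; exact hpvsub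
          rw [List.append_assoc] at hqlive ⊢
          have hlp : live u R p (Term.replaceAt (ρr.rhs.subst σ) p s) := hlive7.2 hlive
          obtain ⟨hsplit1, hliveiff1⟩ := phiPos_append (p' ++ q'') hlp hsubs'
          have hlivepq : live u R (p' ++ q'') (ρr.rhs.subst σ) := hliveiff1.1 hqlive
          have hsubp'σ : Term.sub? p' (ρr.rhs.subst σ) = some (σ x) := by
            have := sub?_subst (σ := σ) hp'sub
            rwa [subst_var] at this
          have hlp' : live u R p' (ρr.rhs.subst σ) := live_of_live_append hlivepq
          obtain ⟨hsplit2, hliveiff2⟩ := phiPos_append q'' hlp' hsubp'σ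
          have hliveq'' : live u R q'' (σ x) := hliveiff2.1 hlivepq
          obtain ⟨hoptr, hxY⟩ := hR.2.2 σ p' x hp'sub hlp'
          obtain ⟨hlivepv, hoptl⟩ := hL.2 σ pv x hpvsub hxY
          have hsubpvσ : Term.sub? pv (ρr.lhs.subst σ) = some (σ x) := by
            have := sub?_subst (σ := σ) hpvsub
            rwa [subst_var] at this
          obtain ⟨hsplit3, hliveiff3⟩ := phiPos_append (pv ++ q'') hlive hsub
          obtain ⟨hsplit4, hliveiff4⟩ := phiPos_append q'' hlivepv hsubpvσ
          have hliveB : live u R (p ++ (pv ++ q'')) s :=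
            hliveiff3.2 (hliveiff4.2 hliveq'')
          have hBmem' : p ++ (pv ++ q'') ∈ B := by rw [← List.append_assoc]; exact hBmem
          have hmemB' := hinv _ hBmem' hliveB
          rw [hsplit3, hsplit4] at hmemB'
          rw [hsplit1, hsplit2, hpos7]
          refine Or.inr ⟨phiPos u R pv (ρr.lhs.subst σ), phiPos u R p' (ρr.rhs.subst σ),
            phiPos u R q'' (σ x), ⟨x, hoptl⟩, by rw [hoptl, hoptr], ?_, ?_⟩
          · rw [List.append_assoc]
            exact hmemB'
          · rw [List.append_assoc]
      · -- the contracted position is dropped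
        have hphieq : phi u R (Term.replaceAt (ρr.rhs.subst σ) p s) = phi u R s :=
          phi_replaceAt_dead _ hlive hsub
        have hres := ih (B' := B') ?_
        · rwa [hphieq] at hres
        intro q hqmem hqlive
        simp only [nextB, Set.mem_union, Set.mem_setOf_eq] at hqmem
        rcases hqmem with (⟨hqB, hnp⟩ | ⟨q', hq', rfl⟩) | ⟨pv, p', q'', hpv, heq, hBmem, rfl⟩
        · obtain ⟨hposeq, hliveiff⟩ := phiPos_replaceAt_not_prefix (ρr.rhs.subst σ) hnp hsub
          have hqlives : live u R q s := hliveiff.1 hqlive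
          rw [hposeq]
          exact hinv q hqB hqlives
        · exact absurd (hlive7.1 (live_of_live_append hqlive)) hlive
        · rw [List.append_assoc] at hqlive
          exact absurd (hlive7.1 (live_of_live_append hqlive)) hlive

theorem overF_inv (hfresh : UFresh F u R) {s : Term α} (hs : s.overSig F) :
    ∀ q ∈ PosF s, live u R q s ∧ phiPos u R q s = q := by
  intro q hq
  obtain ⟨g, ts, hsub⟩ := hq
  have := pat_overF (u := u) (R := R) hfresh Term.var hs hsub
  rwa [subst_id] at this

theorem evsafe_transfer (hfresh : UFresh F u R) (hsig : ∀ ρ ∈ R, ρ.overSig F)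
    {s t : Term α} (hs : s.overSig F) (ht : t.overSig F) (h : EVSafe (USys u R) s t) :
    EVSafe (UoptSys u R) s t := by
  have hres := evseq_sim hfresh hsig h (B' := PosF s) ?_
  · rwa [phi_overF hfresh hs, phi_overF hfresh ht] at hres
  intro q hq _
  rw [(overF_inv hfresh hs q hq).2]
  exact hq

end UoptSound
namespace UoptSound

open scoped Classical

variable {α : Type u} {u : ERule α → ℕ → α} {R : Set (ERule α)} {F : Set α}

theorem plug_app (f : α) (pre post : List (Term α)) (c : Ctx α) (w : Term α) :
    (Ctx.app f pre c post).plug w = Term.app f (pre ++ c.plug w :: post) := rfl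

theorem ctx_phi (C : Ctx α) :
    (∃ C' : Ctx α, ∀ w, phi u R (C.plug w) = C'.plug (phi u R w)) ∨
    (∀ w w', phi u R (C.plug w) = phi u R (C.plug w')) := by
  induction C with
  | hole => exact Or.inl ⟨Ctx.hole, fun w => rfl⟩
  | app f pre c post ih =>
      have hexp : ∀ w, phi u R ((Ctx.app f pre c post).plug w)
          = Term.app f (selFrom (fun i => dropped u R i f) 0 (pre.map (phi u R))
              ++ selFrom (fun i => dropped u R i f) (0 + (pre.map (phi u R)).length)
                  (phi u R (c.plug w) :: post.map (phi u R))) := by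
        intro w
        rw [plug_app, phi_app, List.map_append, List.map_cons,
          selFrom_append (fun i => dropped u R i f)]
      by_cases hd : dropped u R (0 + (pre.map (phi u R)).length) f
      · refine Or.inr (fun w w' => ?_)
        rw [hexp w, hexp w', selFrom_cons, selFrom_cons, if_pos hd, if_pos hd]
      · rcases ih with ⟨C'', hC''⟩ | hEq
        · refine Or.inl ⟨Ctx.app f (selFrom (fun i => dropped u R i f) 0 (pre.map (phi u R)))
            C'' (selFrom (fun i => dropped u R i f) (0 + (pre.map (phi u R)).length + 1)
              (post.map (phi u R))), fun w => ?_⟩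
          rw [hexp w, plug_app, selFrom_cons, if_neg hd, hC'' w]
        · refine Or.inr (fun w w' => ?_)
          rw [hexp w, hexp w', selFrom_cons, selFrom_cons, if_neg hd, if_neg hd, hEq w w']
  
theorem conds_USys {q : ERule α} (h : q ∈ USys u R) : q.conds = [] := by
  obtain ⟨ρ, _, hq⟩ := h
  exact conds_unravelWith hq

theorem conds_UoptSys {q : ERule α} (h : q ∈ UoptSys u R) : q.conds = [] := by
  obtain ⟨ρ, _, hq⟩ := h
  exact conds_unravelWith hq

theorem red_unpack {S : Set (ERule α)} (hS : ∀ ρ' ∈ S, ρ'.conds = []) {s t : Term α}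
    (h : Red S s t) :
    ∃ ρ' ∈ S, ∃ (C : Ctx α) (σ : ℕ → Term α),
      s = C.plug (ρ'.lhs.subst σ) ∧ t = C.plug (ρ'.rhs.subst σ) := by
  obtain ⟨n, hn⟩ := h
  induction n with
  | zero => exact absurd hn (by simp [RedN])
  | succ n ih =>
      rcases hn with hn | ⟨ρ', hρ', C, σ, h1, h2, _⟩
      · exact ih hn
      · exact ⟨ρ', hρ', C, σ, h1, h2⟩

theorem red_sim (hfresh : UFresh F u R) (hsig : ∀ ρ ∈ R, ρ.overSig F) {s t : Term α}
    (h : Red (USys u R) s t) :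
    Relation.ReflTransGen (Red (UoptSys u R)) (phi u R s) (phi u R t) := by
  obtain ⟨ρr, hρr, C, σ, rfl, rfl⟩ := red_unpack (fun ρ' h' => conds_USys h') h
  obtain ⟨ρ, hρ, hq⟩ := hρr
  obtain ⟨qo, hqomem, hqoconds, _, Y, hL, hR⟩ := rule_pkg hfresh hsig hρ hq
  rcases ctx_phi (u := u) (R := R) C with ⟨C', hC'⟩ | hEq
  · refine Relation.ReflTransGen.single ⟨1, Or.inr ⟨qo, ⟨ρ, hρ, hqomem⟩, C',
      (fun x => phi u R (σ x)), ?_, ?_, ?_⟩⟩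
    · rw [hC', hL.1 σ]
    · rw [hC', hR.1 σ]
    · rw [hqoconds]
      intro c hc
      exact absurd hc (by simp)
  · rw [hEq _ (ρr.rhs.subst σ)]

end UoptSound
/-- Let `R` be an eDCTRS over a signature `F`. If the optimized
unraveling `U_opt` is sound for `R`, then Ohlebusch's unraveling `U` is sound for
`R`; likewise, if `U_opt` is sound for `R` w.r.t. EV-safe reduction, then so
is `U`. -/
theorem u_sound_of_uopt_sound {α : Type u} (F : Set α) (R : Set (ERule α))
    (u : ERule α → ℕ → α)
    (hdet : ∀ ρ ∈ R, ρ.Det)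
    (hsig : ∀ ρ ∈ R, ρ.overSig F)
    (hfresh : UFresh F u R) :
    ((∀ s t : Term α, s.overSig F → t.overSig F →
        RedStar (UoptSys u R) s t → RedStar R s t) →
      (∀ s t : Term α, s.overSig F → t.overSig F →
        RedStar (USys u R) s t → RedStar R s t)) ∧
    ((∀ s t : Term α, s.overSig F → t.overSig F →
        EVSafe (UoptSys u R) s t → RedStar R s t) →
      (∀ s t : Term α, s.overSig F → t.overSig F →
        EVSafe (USys u R) s t → RedStar R s t)) := by
  constructor
  · intro hyp s t hs ht hred
    apply hyp s t hs ht
    have hstar : Relation.ReflTransGen (Red (UoptSys u R))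
        (UoptSound.phi u R s) (UoptSound.phi u R t) := by
      clear hyp hs ht
      induction hred with
      | refl => exact Relation.ReflTransGen.refl
      | tail h1 h2 ih => exact ih.trans (UoptSound.red_sim hfresh hsig h2)
    rwa [UoptSound.phi_overF hfresh hs, UoptSound.phi_overF hfresh ht] at hstar
  · intro hyp s t hs ht hsafe
    exact hyp s t hs ht (UoptSound.evsafe_transfer hfresh hsig hs ht hsafe)
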